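/- arXiv:2105.01265 — 7 statements merged into one kernel-verified Lean document; each statement's English description precedes it below -/
import Mathlib

section
/- Let G be a finite simple graph with m edges, and for each edge e = {u,v} of G let f(e) = min(deg(u), deg(v)). Then the sum of f(e) over all edges e of G is at most 4·m^{3/2}. -/
/-- The minimum of the degrees of the two endpoints of an edge. -/
def edgeMinDeg {V : Type*} [Fintype V] (G : SimpleGraph V) [DecidableRel G.Adj]
    (e : Sym2 V) : ℕ :=
  Sym2.lift ⟨fun u v => min (G.degree u) (G.degree v), fun u v => min_comm _ _⟩ e

open Finset

section Aux

variable {V : Type*} [Fintype V] [DecidableEq V] (G : SimpleGraph V) [DecidableRel G.Adj]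

lemma dart_sum_eq_twice :
    ∑ d : G.Dart, edgeMinDeg G d.edge = 2 * ∑ e ∈ G.edgeFinset, edgeMinDeg G e := by
  rw [← Finset.sum_fiberwise_of_maps_to (g := SimpleGraph.Dart.edge)
      (t := G.edgeFinset) (fun d _ => by rw [SimpleGraph.mem_edgeFinset]; exact d.edge_mem)]
  rw [Finset.mul_sum]
  refine Finset.sum_congr rfl fun e he => ?_
  have hcard : #({d : G.Dart | d.edge = e} : Finset _) = 2 :=
    G.dart_edge_fiber_card e (SimpleGraph.mem_edgeFinset.mp he)
  calc ∑ d ∈ ({d : G.Dart | d.edge = e} : Finset _), edgeMinDeg G d.edge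
      = ∑ _d ∈ ({d : G.Dart | d.edge = e} : Finset _), edgeMinDeg G e := by
        refine Finset.sum_congr rfl fun d hd => ?_
        rw [Finset.mem_filter] at hd
        rw [hd.2]
    _ = 2 * edgeMinDeg G e := by rw [Finset.sum_const, hcard, smul_eq_mul]

lemma edge_sum_le_vertex_sum :
    ∑ e ∈ G.edgeFinset, edgeMinDeg G e
      ≤ ∑ v, G.degree v * #((G.neighborFinset v).filter fun w => G.degree v ≤ G.degree w) := by
  have key : ∑ d : G.Dart, edgeMinDeg G d.edge
      ≤ 2 * ∑ v, G.degree v *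
        #((G.neighborFinset v).filter fun w => G.degree v ≤ G.degree w) := by
    have hpt : ∀ d : G.Dart, edgeMinDeg G d.edge ≤
        (if G.degree d.fst ≤ G.degree d.snd then G.degree d.fst else 0) +
        (if G.degree d.symm.fst ≤ G.degree d.symm.snd then G.degree d.symm.fst else 0) := by
      intro d
      have hed : edgeMinDeg G d.edge = min (G.degree d.fst) (G.degree d.snd) := rfl
      rw [hed]
      rcases le_or_gt (G.degree d.fst) (G.degree d.snd) with h | h
      · simp [SimpleGraph.Dart.symm, h, min_eq_left h]
      · simp [SimpleGraph.Dart.symm, le_of_lt h, not_le.mpr h, min_eq_right h.le]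
        exact le_of_eq (if_pos h.le).symm
    calc ∑ d : G.Dart, edgeMinDeg G d.edge
        ≤ ∑ d : G.Dart,
          ((if G.degree d.fst ≤ G.degree d.snd then G.degree d.fst else 0) +
           (if G.degree d.symm.fst ≤ G.degree d.symm.snd then G.degree d.symm.fst else 0)) :=
          Finset.sum_le_sum fun d _ => hpt d
      _ = 2 * ∑ d : G.Dart,
            (if G.degree d.fst ≤ G.degree d.snd then G.degree d.fst else 0) := by
          rw [Finset.sum_add_distrib, two_mul]
          congr 1
          exact Fintype.sum_bijective SimpleGraph.Dart.symm
            SimpleGraph.Dart.symm_involutive.bijective _ _ (fun d => rfl)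
      _ = 2 * ∑ v, G.degree v *
            #((G.neighborFinset v).filter fun w => G.degree v ≤ G.degree w) := by
          congr 1
          rw [← Finset.sum_fiberwise_of_maps_to (g := fun d : G.Dart => d.fst)
            (t := (Finset.univ : Finset V)) (fun d _ => Finset.mem_univ _)]
          refine Finset.sum_congr rfl fun v _ => ?_
          have himg : ({d : G.Dart | d.fst = v} : Finset _)
              = Finset.univ.image (G.dartOfNeighborSet v) := G.dart_fst_fiber v
          rw [himg, Finset.sum_image (fun a _ b _ h => G.dartOfNeighborSet_injective v h)]
          have : ∑ w : G.neighborSet v,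
              (if G.degree v ≤ G.degree w then G.degree v else 0)
              = ∑ w ∈ G.neighborFinset v,
                (if G.degree v ≤ G.degree w then G.degree v else 0) := by
            rw [SimpleGraph.neighborFinset_def]
            exact Finset.sum_set_coe (s := G.neighborSet v)
              (f := fun w => if G.degree v ≤ G.degree w then G.degree v else 0)
          rw [show (∑ w : G.neighborSet v,
              (if G.degree (G.dartOfNeighborSet v w).fst ≤
                  G.degree (G.dartOfNeighborSet v w).snd
                then G.degree (G.dartOfNeighborSet v w).fst else 0))
              = ∑ w : G.neighborSet v,
                (if G.degree v ≤ G.degree w then G.degree v else 0) from rfl, this,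
            Finset.sum_ite, Finset.sum_const, Finset.sum_const]
          simp [mul_comm]
  have h2 := (dart_sum_eq_twice G) ▸ key
  omega

lemma term_le (v : V) :
    G.degree v * #((G.neighborFinset v).filter fun w => G.degree v ≤ G.degree w)
      ≤ min ((G.degree v) ^ 2) (2 * #G.edgeFinset) := by
  set c := #((G.neighborFinset v).filter fun w => G.degree v ≤ G.degree w) with hc
  refine le_min ?_ ?_
  · have : c ≤ G.degree v := by
      rw [hc, ← G.card_neighborFinset_eq_degree v]
      exact Finset.card_filter_le _ _
    calc G.degree v * c ≤ G.degree v * G.degree v := Nat.mul_le_mul_left _ this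
      _ = (G.degree v) ^ 2 := (sq _).symm
  · calc G.degree v * c = ∑ _w ∈ (G.neighborFinset v).filter
          fun w => G.degree v ≤ G.degree w, G.degree v := by
          rw [Finset.sum_const, smul_eq_mul, mul_comm]
    _ ≤ ∑ w ∈ (G.neighborFinset v).filter fun w => G.degree v ≤ G.degree w, G.degree w :=
        Finset.sum_le_sum fun w hw => (Finset.mem_filter.mp hw).2
    _ ≤ ∑ w, G.degree w :=
        Finset.sum_le_sum_of_subset (Finset.filter_subset _ _ |>.trans (Finset.subset_univ _))
    _ = 2 * #G.edgeFinset := G.sum_degrees_eq_twice_card_edges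

end Aux

/-- For a finite simple graph `G` with `m` edges,
the sum over all edges `{u,v}` of `min (deg u) (deg v)` is at most `4 * m^(3/2)`. -/
theorem sum_min_degree_le {V : Type*} [Fintype V] [DecidableEq V]
    (G : SimpleGraph V) [DecidableRel G.Adj] :
    ((∑ e ∈ G.edgeFinset, edgeMinDeg G e : ℕ) : ℝ)
      ≤ 4 * (G.edgeFinset.card : ℝ) ^ ((3 : ℝ) / 2) := by
  set m : ℕ := #G.edgeFinset with hm
  have h1 : (∑ e ∈ G.edgeFinset, edgeMinDeg G e : ℕ)
      ≤ ∑ v, G.degree v * #((G.neighborFinset v).filter fun w => G.degree v ≤ G.degree w) :=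
    edge_sum_le_vertex_sum G
  have hmnn : (0:ℝ) ≤ (m:ℝ) := Nat.cast_nonneg m
  have h2 : ∀ v, (G.degree v * #((G.neighborFinset v).filter
      fun w => G.degree v ≤ G.degree w) : ℝ) ≤ (G.degree v : ℝ) * Real.sqrt (2 * m) := by
    intro v
    have := term_le G v
    have hcast := (Nat.cast_le (α := ℝ)).mpr this
    push_cast at hcast
    refine hcast.trans ?_
    have hd : (0:ℝ) ≤ (G.degree v : ℝ) := Nat.cast_nonneg _
    have h2m : (0:ℝ) ≤ 2 * (m:ℝ) := by positivity
    have hmin : min (((G.degree v : ℝ)) ^ 2) (2 * (m:ℝ))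
        ≤ Real.sqrt ((((G.degree v : ℝ)) ^ 2) * (2 * (m:ℝ))) := by
      have hnn : (0:ℝ) ≤ min (((G.degree v : ℝ)) ^ 2) (2 * (m:ℝ)) :=
        le_min (by positivity) h2m
      rw [Real.le_sqrt hnn (by positivity)]
      calc min (((G.degree v : ℝ)) ^ 2) (2 * (m:ℝ)) ^ 2
          = min (((G.degree v : ℝ)) ^ 2) (2 * (m:ℝ)) *
            min (((G.degree v : ℝ)) ^ 2) (2 * (m:ℝ)) := sq _
        _ ≤ (((G.degree v : ℝ)) ^ 2) * (2 * (m:ℝ)) :=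
            mul_le_mul (min_le_left _ _) (min_le_right _ _) hnn (by positivity)
    refine hmin.trans_eq ?_
    rw [Real.sqrt_mul (by positivity), Real.sqrt_sq hd]
  have h3 : ((∑ e ∈ G.edgeFinset, edgeMinDeg G e : ℕ) : ℝ)
      ≤ (2 * m : ℝ) * Real.sqrt (2 * m) := by
    calc ((∑ e ∈ G.edgeFinset, edgeMinDeg G e : ℕ) : ℝ)
        ≤ ((∑ v, G.degree v * #((G.neighborFinset v).filter
            fun w => G.degree v ≤ G.degree w) : ℕ) : ℝ) := Nat.cast_le.mpr h1
      _ = ∑ v, ((G.degree v * #((G.neighborFinset v).filter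
            fun w => G.degree v ≤ G.degree w) : ℕ) : ℝ) := by push_cast; ring_nf
      _ ≤ ∑ v, (G.degree v : ℝ) * Real.sqrt (2 * m) :=
          Finset.sum_le_sum fun v _ => by exact_mod_cast h2 v
      _ = ((∑ v, G.degree v : ℕ) : ℝ) * Real.sqrt (2 * m) := by
          rw [← Finset.sum_mul]; push_cast; ring
      _ = (2 * m : ℝ) * Real.sqrt (2 * m) := by
          rw [G.sum_degrees_eq_twice_card_edges]; push_cast; ring
  refine h3.trans ?_
  have hs2 : Real.sqrt 2 ≤ 2 := by
    nlinarith [Real.sq_sqrt (show (0:ℝ) ≤ 2 by norm_num), Real.sqrt_nonneg 2]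
  have hsqrt : Real.sqrt (2 * m) ≤ 2 * Real.sqrt m := by
    rw [Real.sqrt_mul (by norm_num : (0:ℝ) ≤ 2)]
    exact mul_le_mul_of_nonneg_right hs2 (Real.sqrt_nonneg _)
  have hrpow : ((m:ℝ)) ^ ((3:ℝ)/2) = (m:ℝ) * Real.sqrt (m:ℝ) := by
    rw [Real.sqrt_eq_rpow, show (3:ℝ)/2 = 1 + 1/2 by norm_num,
      Real.rpow_add' hmnn (by norm_num), Real.rpow_one]
  rw [hrpow]
  calc (2 * (m:ℝ)) * Real.sqrt (2 * m) ≤ (2 * (m:ℝ)) * (2 * Real.sqrt m) :=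
      mul_le_mul_of_nonneg_left hsqrt (by positivity)
    _ = 4 * ((m:ℝ) * Real.sqrt m) := by ring
end

section
/- Let G be a finite simple graph with m edges whose edge set can be partitioned into k subsets, each of which forms an acyclic subgraph (a forest) on the vertex set of G. Then the sum over all edges {u,v} of G of min(deg(u), deg(v)) is at most 2·k·m. -/
open SimpleGraph Finset

/-- In a finite acyclic graph, each edge can be injectively assigned one of its endpoints. -/
lemma exists_injOn_endpoint {V : Type*} [Fintype V] [DecidableEq V]
    (H : SimpleGraph V) (hH : H.IsAcyclic) :
    ∃ f : Sym2 V → V, Set.InjOn f H.edgeSet ∧ ∀ e ∈ H.edgeSet, f e ∈ e := by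
  classical
  -- root of each connected component
  set root : V → V := fun v => (H.connectedComponentMk v).out with hrootdef
  have hreach : ∀ v, H.Reachable v (root v) := by
    intro v
    exact ConnectedComponent.eq.mp (Quot.out_eq _).symm
  -- unique path to root
  let p : ∀ v, H.Path v (root v) := fun v => (hreach v).some.toPath
  have hroot_eq : ∀ {a b : V}, H.Adj a b → root a = root b := by
    intro a b h
    simp only [hrootdef]
    rw [ConnectedComponent.eq.mpr h.reachable]
  have key2 : ∀ a b (h : H.Adj a b), a ∈ (p b).1.support →
      (p a).1.length + 1 = (p b).1.length := by
    intro a b h ha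
    have htu : (p b).1.takeUntil a ha = (Path.singleton h.symm).1 := by
      have := hH.path_unique ⟨(p b).1.takeUntil a ha, (p b).2.takeUntil ha⟩ (Path.singleton h.symm)
      exact congrArg Subtype.val this
    have hdu : (p a).1 = ((p b).1.dropUntil a ha).copy rfl (hroot_eq h).symm := by
      have := hH.path_unique (p a)
        ⟨((p b).1.dropUntil a ha).copy rfl (hroot_eq h).symm, by
          simpa using (p b).2.dropUntil ha⟩
      exact congrArg Subtype.val this
    have hspec := SimpleGraph.Walk.take_spec (p b).1 ha
    have hlen := congrArg SimpleGraph.Walk.length hspec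
    rw [SimpleGraph.Walk.length_append, htu] at hlen
    simp only [Path.singleton, SimpleGraph.Walk.length_cons, SimpleGraph.Walk.length_nil] at hlen
    rw [hdu]
    simp only [SimpleGraph.Walk.length_copy]
    omega
  have key1 : ∀ a b (h : H.Adj a b), a ∉ (p b).1.support →
      (p a).1 = (SimpleGraph.Walk.cons h (p b).1).copy rfl (hroot_eq h).symm := by
    intro a b h ha
    have := hH.path_unique (p a)
      ⟨(SimpleGraph.Walk.cons h (p b).1).copy rfl (hroot_eq h).symm, by
        simp [SimpleGraph.Walk.cons_isPath_iff, (p b).2, ha]⟩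
    exact congrArg Subtype.val this
  have hne : ∀ a b, H.Adj a b → (p a).1.length ≠ (p b).1.length := by
    intro a b h
    by_cases ha : a ∈ (p b).1.support
    · have := key2 a b h ha; omega
    · have := congrArg SimpleGraph.Walk.length (key1 a b h ha)
      simp only [SimpleGraph.Walk.length_copy, SimpleGraph.Walk.length_cons] at this
      omega
  have hfirst : ∀ a b (h : H.Adj a b), (p b).1.length < (p a).1.length →
      (p a).1.getVert 1 = b := by
    intro a b h hlt
    by_cases ha : a ∈ (p b).1.support
    · have := key2 a b h ha; omega
    · rw [key1 a b h ha]
      simp [SimpleGraph.Walk.getVert_copy]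
  -- the assignment
  set f : Sym2 V → V := fun e =>
    if he : ∃ v, v ∈ e ∧ ∀ w ∈ e, (p w).1.length ≤ (p v).1.length then he.choose
    else (Quot.out e).1 with hfdef
  have hmem : ∀ e ∈ H.edgeSet, f e ∈ e ∧ ∀ w ∈ e, (p w).1.length ≤ (p (f e)).1.length := by
    intro e _
    have hex : ∃ v, v ∈ e ∧ ∀ w ∈ e, (p w).1.length ≤ (p v).1.length := by
      induction e with
      | _ a b =>
        rcases le_total ((p a).1.length) ((p b).1.length) with hle | hle
        · exact ⟨b, by simp, by intro w hw; rcases Sym2.mem_iff.mp hw with rfl | rfl <;> simp [hle]⟩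
        · exact ⟨a, by simp, by intro w hw; rcases Sym2.mem_iff.mp hw with rfl | rfl <;> simp [hle]⟩
    have hfe : f e = hex.choose := by rw [hfdef]; exact dif_pos hex
    rw [hfe]
    exact hex.choose_spec
  -- key representation : e = s(f e, getVert 1 of path from f e)
  have hrepr : ∀ e ∈ H.edgeSet, e = s(f e, (p (f e)).1.getVert 1) := by
    intro e he
    obtain ⟨hfe, hmax⟩ := hmem e he
    obtain ⟨b, hb⟩ := Sym2.mem_iff_exists.mp hfe
    have hadj : H.Adj (f e) b := by
      rw [← SimpleGraph.mem_edgeSet, ← hb]; exact he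
    have hlt : (p b).1.length < (p (f e)).1.length :=
      lt_of_le_of_ne (hmax b (by rw [hb]; simp)) (fun hEq => hne (f e) b hadj hEq.symm)
    rw [hfirst (f e) b hadj hlt]
    exact hb
  refine ⟨f, ?_, fun e he => (hmem e he).1⟩
  intro e1 he1 e2 he2 hf
  rw [hrepr e1 he1, hrepr e2 he2, hf]

/-- Bound the min-degree sum over a set of edges of an acyclic subgraph. -/
lemma forest_sum_bound {V : Type*} [Fintype V] [DecidableEq V]
    (G H : SimpleGraph V) [DecidableRel G.Adj] (hH : H.IsAcyclic)
    (f : Sym2 V → V) (hinj : Set.InjOn f H.edgeSet) (hmem : ∀ e ∈ H.edgeSet, f e ∈ e)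
    (T : Finset (Sym2 V)) (hT : ↑T ⊆ H.edgeSet) :
    ∑ e ∈ T, edgeMinDeg G e ≤ 2 * G.edgeFinset.card := by
  have hle : ∀ e ∈ T, edgeMinDeg G e ≤ G.degree (f e) := by
    intro e heT
    have hfe := hmem e (hT heT)
    induction e with
    | _ a b =>
      rcases Sym2.mem_iff.mp hfe with h | h <;> rw [h] <;>
          simp only [edgeMinDeg, Sym2.lift_mk]
      · exact min_le_left _ _
      · exact min_le_right _ _
  calc ∑ e ∈ T, edgeMinDeg G e ≤ ∑ e ∈ T, G.degree (f e) := Finset.sum_le_sum hle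
    _ = ∑ v ∈ T.image f, G.degree v := by
        rw [Finset.sum_image]
        intro e1 h1 e2 h2 h
        exact hinj (hT h1) (hT h2) h
    _ ≤ ∑ v : V, G.degree v := Finset.sum_le_sum_of_subset (Finset.subset_univ _)
    _ = 2 * G.edgeFinset.card := G.sum_degrees_eq_twice_card_edges

/-- If the edge set of a finite simple graph `G` with `m` edges can be partitioned into
`k` forests, then the sum over all edges `{u,v}` of `min (deg u) (deg v)` is at most
`2 * k * m`. -/
theorem sum_min_degree_le_of_forest_partition {V : Type*} [Fintype V] [DecidableEq V]
    (G : SimpleGraph V) [DecidableRel G.Adj] (k : ℕ) (F : Fin k → Set (Sym2 V))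
    (hdisj : Pairwise (Function.onFun Disjoint F))
    (hunion : ⋃ i, F i = G.edgeSet)
    (hforest : ∀ i, (SimpleGraph.fromEdgeSet (F i)).IsAcyclic) :
    ∑ e ∈ G.edgeFinset, edgeMinDeg G e ≤ 2 * k * G.edgeFinset.card := by
  classical
  set T : Fin k → Finset (Sym2 V) := fun i => G.edgeFinset.filter (· ∈ F i) with hTdef
  have hsplit : G.edgeFinset = Finset.univ.biUnion T := by
    ext e
    simp only [Finset.mem_biUnion, Finset.mem_univ, true_and, hTdef, Finset.mem_filter]
    constructor
    · intro he
      have : e ∈ ⋃ i, F i := by rw [hunion]; exact mem_edgeFinset.mp he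
      obtain ⟨i, hi⟩ := Set.mem_iUnion.mp this
      exact ⟨i, he, hi⟩
    · rintro ⟨i, hi, -⟩; exact hi
  have hpd : ((Finset.univ : Finset (Fin k)) : Set (Fin k)).PairwiseDisjoint T := by
    intro i _ j _ hij
    simp only [Function.onFun]
    rw [Finset.disjoint_left]
    intro e he1 he2
    simp only [hTdef, Finset.mem_filter] at he1 he2
    exact Set.disjoint_left.mp (hdisj hij) he1.2 he2.2
  conv_lhs => rw [hsplit, Finset.sum_biUnion hpd]
  have hbound : ∀ i : Fin k, ∑ e ∈ T i, edgeMinDeg G e ≤ 2 * G.edgeFinset.card := by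
    intro i
    obtain ⟨f, hinj, hmem⟩ := exists_injOn_endpoint (SimpleGraph.fromEdgeSet (F i)) (hforest i)
    refine forest_sum_bound G _ (hforest i) f hinj hmem (T i) ?_
    intro e he
    simp only [hTdef, Finset.coe_filter, Set.mem_setOf_eq] at he
    rw [SimpleGraph.edgeSet_fromEdgeSet]
    exact ⟨he.2, G.not_isDiag_of_mem_edgeSet (mem_edgeFinset.mp he.1)⟩
  calc ∑ i : Fin k, ∑ e ∈ T i, edgeMinDeg G e ≤ ∑ _i : Fin k, 2 * G.edgeFinset.card :=
        Finset.sum_le_sum fun i _ => hbound i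
    _ = 2 * k * G.edgeFinset.card := by
        rw [Finset.sum_const, Finset.card_univ, Fintype.card_fin, smul_eq_mul]; ring
end

section
/- Let G be a finite simple graph with m edges whose edge set can be partitioned into k subsets, each of which forms an acyclic subgraph (a forest) on the vertex set of G. Then the number of triangles of G is at most (2/3)·k·m. -/
open SimpleGraph

lemma forest_injection {V : Type*} {H : SimpleGraph V} (hH : H.IsAcyclic) :
    ∃ f : Sym2 V → V, (∀ e ∈ H.edgeSet, f e ∈ e) ∧ Set.InjOn f H.edgeSet := by
  classical
  have pu := isAcyclic_iff_path_unique.mp hH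
  set root : V → V := fun x => Quot.out (H.connectedComponentMk x) with hroot
  set Q : Sym2 V → V → Prop := fun e x =>
    ∃ (y : V) (h : H.Adj y x) (p : H.Walk (root x) y),
      p.IsPath ∧ (p.concat h).IsPath ∧ e = s(y, x) with hQ
  have hex : ∀ e ∈ H.edgeSet, ∃ x, Q e x := by
    intro e he
    induction e using Sym2.ind with
    | _ u v =>
      rw [SimpleGraph.mem_edgeSet] at he
      have hcomp : root v = root u := by
        simp only [hroot]
        rw [ConnectedComponent.connectedComponentMk_eq_of_adj he.symm]
      have hreach : H.Reachable (root u) u := by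
        apply ConnectedComponent.exact
        simp only [hroot]
        exact Quot.out_eq _
      obtain ⟨p0⟩ := hreach
      set p := p0.toPath with hp
      by_cases hv : v ∈ p.val.support
      · -- assign to u
        refine ⟨u, v, he.symm, p.val.takeUntil v hv, p.prop.takeUntil hv, ?_, Sym2.eq_swap⟩
        have hq2 : p.val.dropUntil v hv = Walk.cons he.symm Walk.nil := by
          have := pu ⟨p.val.dropUntil v hv, p.prop.dropUntil hv⟩ (Path.singleton he.symm)
          simpa [Path.singleton] using congrArg Subtype.val this
        have := p.val.take_spec hv
        rw [hq2] at this
        rw [← Walk.concat_eq_append] at this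
        rw [this]
        exact p.prop
      · -- assign to v
        refine ⟨v, u, he, ?_⟩
        rw [hcomp]
        refine ⟨p.val, p.prop, ?_, rfl⟩
        have : (p.val.concat he).reverse = Walk.cons he.symm p.val.reverse := by
          simp [Walk.concat_eq_append]
        rw [← Walk.isPath_reverse_iff, this]
        exact p.prop.reverse.cons (by simpa using hv)
  let f : Sym2 V → V := fun e => if h : ∃ x, Q e x then h.choose else (Quot.out e).1
  have hQf : ∀ e ∈ H.edgeSet, Q e (f e) := by
    intro e he
    have h := hex e he
    simp only [f, dif_pos h]
    exact h.choose_spec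
  have key : ∀ (x : V) (e1 e2 : Sym2 V), Q e1 x → Q e2 x → e1 = e2 := by
    rintro x e1 e2 ⟨y1, hadj1, p1, hp1, hcat1, heq1⟩ ⟨y2, hadj2, p2, hp2, hcat2, heq2⟩
    have hpq := pu ⟨p1.concat hadj1, hcat1⟩ ⟨p2.concat hadj2, hcat2⟩
    obtain ⟨hy, -⟩ := Walk.concat_inj (congrArg Subtype.val hpq)
    rw [heq1, heq2, hy]
  refine ⟨f, ?_, ?_⟩
  · intro e he
    obtain ⟨y, hadj, p, hp, hcat, heq⟩ := hQf e he
    have : f e ∈ s(y, f e) := by simp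
    rwa [← heq] at this
  · intro e1 h1 e2 h2 hfe
    exact key (f e1) e1 e2 (hQf e1 h1) (by rw [hfe]; exact hQf e2 h2)




/-- If the edge set of a finite simple graph `G` with `m` edges can be partitioned into
`k` forests, then `G` has at most `(2/3) * k * m` triangles. -/
theorem card_triangles_le_of_forest_partition {V : Type*} [Fintype V] [DecidableEq V]
    (G : SimpleGraph V) [DecidableRel G.Adj] (k : ℕ) (F : Fin k → Set (Sym2 V))
    (hdisj : Pairwise (Function.onFun Disjoint F))
    (hunion : ⋃ i, F i = G.edgeSet)
    (hforest : ∀ i, (SimpleGraph.fromEdgeSet (F i)).IsAcyclic) :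
    ((G.cliqueFinset 3).card : ℝ)
      ≤ 2 / 3 * (k : ℝ) * (G.edgeFinset.card : ℝ) := by
  classical
  rcases Nat.eq_zero_or_pos k with hk | hk
  · subst hk
    have hE : G.edgeSet = ∅ := by rw [← hunion]; simp
    have hT : G.cliqueFinset 3 = ∅ := by
      rw [Finset.eq_empty_iff_forall_notMem]
      intro t ht
      rw [SimpleGraph.mem_cliqueFinset_iff] at ht
      obtain ⟨a, ha, b, hb, hne⟩ := Finset.one_lt_card.mp (by rw [ht.card_eq]; norm_num)
      have : G.Adj a b := ht.isClique ha hb hne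
      have : s(a, b) ∈ G.edgeSet := this
      rw [hE] at this
      exact this
    rw [hT, Finset.card_empty]
    norm_num
  haveI : Nonempty (Fin k) := ⟨⟨0, hk⟩⟩
  have hsub : ∀ i, F i ⊆ G.edgeSet := fun i => hunion ▸ Set.subset_iUnion F i
  have hFedge : ∀ i, F i ⊆ (SimpleGraph.fromEdgeSet (F i)).edgeSet := by
    intro i e he
    rw [SimpleGraph.edgeSet_fromEdgeSet]
    exact ⟨he, G.not_isDiag_of_mem_edgeSet (hsub i he)⟩
  choose fI hfImem hfIinj using fun i => forest_injection (hforest i)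
  set idx : Sym2 V → Fin k := fun e => if h : ∃ i, e ∈ F i then h.choose else Classical.arbitrary _
    with hidxdef
  have hidx : ∀ e ∈ G.edgeSet, e ∈ F (idx e) := by
    intro e he
    have h : ∃ i, e ∈ F i := Set.mem_iUnion.mp (by rw [hunion]; exact he)
    simp only [hidxdef, dif_pos h]
    exact h.choose_spec
  set ff : Sym2 V → V := fun e => fI (idx e) e with hffdef
  have hffmem : ∀ e ∈ G.edgeSet, ff e ∈ e := fun e he => hfImem _ _ (hFedge _ (hidx e he))
  have hffinj : ∀ e1 ∈ G.edgeSet, ∀ e2 ∈ G.edgeSet,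
      idx e1 = idx e2 → ff e1 = ff e2 → e1 = e2 := by
    intro e1 h1 e2 h2 hi hf
    refine hfIinj (idx e1) (hFedge _ (hidx e1 h1)) ?_ ?_
    · rw [hi]; exact hFedge _ (hidx e2 h2)
    · simpa [hffdef, hi] using hf
  -- the fiber over each triangle
  set fiber : Finset V → Finset (V × V × V) := fun t =>
    (Finset.univ ×ˢ Finset.univ ×ˢ Finset.univ).filter fun p =>
      p.1 ∈ t ∧ p.2.1 ∈ t ∧ p.2.2 ∈ t ∧ p.1 ≠ p.2.1 ∧ p.1 ≠ p.2.2 ∧ p.2.1 ≠ p.2.2 ∧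
        ff s(p.1, p.2.1) = p.1 with hfiberdef
  have hfibermem : ∀ (t : Finset V) (u v w : V), u ∈ t → v ∈ t → w ∈ t → u ≠ v → u ≠ w →
      v ≠ w → ff s(u, v) = u → (u, v, w) ∈ fiber t := by
    intro t u v w h1 h2 h3 h4 h5 h6 h7
    simp [hfiberdef, h1, h2, h3, h4, h5, h6, h7]
  set S := (G.cliqueFinset 3).sigma fiber with hSdef
  -- lower bound on fibers
  have hlow : ∀ t ∈ G.cliqueFinset 3, 3 ≤ (fiber t).card := by
    intro t htmem
    rw [SimpleGraph.mem_cliqueFinset_iff] at htmem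
    obtain ⟨a, b, c, hab, hac, hbc, rfl⟩ := Finset.card_eq_three.mp htmem.card_eq
    have hclique := htmem.isClique
    have haT : a ∈ ({a, b, c} : Finset V) := by simp
    have hbT : b ∈ ({a, b, c} : Finset V) := by simp
    have hcT : c ∈ ({a, b, c} : Finset V) := by simp
    have hadjab : G.Adj a b := hclique (by simp) (by simp) hab
    have hadjac : G.Adj a c := hclique (by simp) (by simp) hac
    have hadjbc : G.Adj b c := hclique (by simp) (by simp) hbc
    set x1 : V × V × V := if ff s(a, b) = a then (a, b, c) else (b, a, c) with hx1
    set x2 : V × V × V := if ff s(a, c) = a then (a, c, b) else (c, a, b) with hx2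
    set x3 : V × V × V := if ff s(b, c) = b then (b, c, a) else (c, b, a) with hx3
    have hm1 : x1 ∈ fiber {a, b, c} := by
      rcases Sym2.mem_iff.mp (hffmem _ (G.mem_edgeSet.mpr hadjab)) with h | h
      · rw [hx1, if_pos h]; exact hfibermem _ a b c haT hbT hcT hab hac hbc h
      · rw [hx1, if_neg (by rw [h]; exact hab.symm)]
        refine hfibermem _ b a c hbT haT hcT (Ne.symm hab) hbc hac ?_
        rw [Sym2.eq_swap]; exact h
    have hm2 : x2 ∈ fiber {a, b, c} := by
      rcases Sym2.mem_iff.mp (hffmem _ (G.mem_edgeSet.mpr hadjac)) with h | h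
      · rw [hx2, if_pos h]; exact hfibermem _ a c b haT hcT hbT hac hab (Ne.symm hbc) h
      · rw [hx2, if_neg (by rw [h]; exact hac.symm)]
        refine hfibermem _ c a b hcT haT hbT (Ne.symm hac) (Ne.symm hbc) hab ?_
        rw [Sym2.eq_swap]; exact h
    have hm3 : x3 ∈ fiber {a, b, c} := by
      rcases Sym2.mem_iff.mp (hffmem _ (G.mem_edgeSet.mpr hadjbc)) with h | h
      · rw [hx3, if_pos h]; exact hfibermem _ b c a hbT hcT haT hbc (Ne.symm hab) (Ne.symm hac) h
      · rw [hx3, if_neg (by rw [h]; exact hbc.symm)]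
        refine hfibermem _ c b a hcT hbT haT (Ne.symm hbc) (Ne.symm hac) (Ne.symm hab) ?_
        rw [Sym2.eq_swap]; exact h
    have h3rd1 : x1.2.2 = c := by rw [hx1]; split <;> rfl
    have h3rd2 : x2.2.2 = b := by rw [hx2]; split <;> rfl
    have h3rd3 : x3.2.2 = a := by rw [hx3]; split <;> rfl
    have h12 : x1 ≠ x2 := fun h => hbc (by rw [← h3rd2, ← h, h3rd1])
    have h13 : x1 ≠ x3 := fun h => hac (by rw [← h3rd3, ← h, h3rd1])
    have h23 : x2 ≠ x3 := fun h => hab (by rw [← h3rd3, ← h, h3rd2])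
    calc (3 : ℕ) = ({x1, x2, x3} : Finset (V × V × V)).card := by
          rw [Finset.card_insert_of_notMem (by simp [h12, h13]),
            Finset.card_insert_of_notMem (by simp [h23]), Finset.card_singleton]
      _ ≤ (fiber {a, b, c}).card := by
          apply Finset.card_le_card
          intro x hx
          simp only [Finset.mem_insert, Finset.mem_singleton] at hx
          rcases hx with rfl | rfl | rfl <;> assumption
  have hlower : (G.cliqueFinset 3).card * 3 ≤ S.card := by
    rw [hSdef, Finset.card_sigma]
    calc (G.cliqueFinset 3).card * 3 = (G.cliqueFinset 3).card • 3 := by rw [smul_eq_mul]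
      _ ≤ ∑ t ∈ G.cliqueFinset 3, (fiber t).card := Finset.card_nsmul_le_sum _ _ _ hlow
  -- the target of the injection
  set Tgt : Finset (Fin k × Σ _ : Sym2 V, V) :=
    (Finset.univ : Finset (Fin k)) ×ˢ
      (G.edgeFinset.sigma fun e => Finset.univ.filter (· ∈ e)) with hTgtdef
  have hTgtcard : Tgt.card = k * (G.edgeFinset.card * 2) := by
    rw [hTgtdef, Finset.card_product, Finset.card_univ, Fintype.card_fin, Finset.card_sigma]
    congr 1
    rw [Finset.sum_congr rfl (fun e he => ?_), Finset.sum_const, smul_eq_mul]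
    obtain ⟨a, b, hne, rfl⟩ : ∃ a b, a ≠ b ∧ e = s(a, b) := by
      induction e using Sym2.ind with
      | _ x y =>
        exact ⟨x, y, (SimpleGraph.mem_edgeFinset.mp he).ne, rfl⟩
    have : Finset.univ.filter (· ∈ s(a, b)) = {a, b} := by
      ext x; simp [Sym2.mem_iff]
    rw [this, Finset.card_insert_of_notMem (by simp [hne]), Finset.card_singleton]
  -- the injection
  have hupper : S.card ≤ Tgt.card := by
    apply Finset.card_le_card_of_injOn
      (fun p => (idx s(p.2.1, p.2.2.1), ⟨s(p.2.1, p.2.2.2), p.2.1⟩))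
    · rintro ⟨t, u, v, w⟩ hp
      rw [hSdef, Finset.mem_coe, Finset.mem_sigma] at hp
      obtain ⟨htmem, hfib⟩ := hp
      rw [SimpleGraph.mem_cliqueFinset_iff] at htmem
      simp only [hfiberdef, Finset.mem_filter] at hfib
      obtain ⟨-, hu, hv, hw, huv, huw, hvw, hffe⟩ := hfib
      have hadjuw : G.Adj u w := htmem.isClique hu hw huw
      rw [hTgtdef, Finset.mem_coe, Finset.mem_product]
      refine ⟨Finset.mem_univ _, ?_⟩
      rw [Finset.mem_sigma]
      exact ⟨SimpleGraph.mem_edgeFinset.mpr (G.mem_edgeSet.mpr hadjuw), by simp⟩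
    · rintro ⟨t1, u1, v1, w1⟩ hp1 ⟨t2, u2, v2, w2⟩ hp2 heq
      rw [Finset.mem_coe, Finset.mem_sigma] at hp1 hp2
      obtain ⟨ht1, hf1⟩ := hp1
      obtain ⟨ht2, hf2⟩ := hp2
      rw [SimpleGraph.mem_cliqueFinset_iff] at ht1 ht2
      simp only [hfiberdef, Finset.mem_filter] at hf1 hf2
      obtain ⟨-, hu1, hv1, hw1, huv1, huw1, hvw1, hffe1⟩ := hf1
      obtain ⟨-, hu2, hv2, hw2, huv2, huw2, hvw2, hffe2⟩ := hf2
      simp only [Prod.mk.injEq, Sigma.mk.inj_iff, heq_iff_eq] at heq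
      obtain ⟨hidxeq, hew, hueq⟩ := heq
      subst hueq
      have hweq : w1 = w2 := by
        rcases Sym2.eq_iff.mp hew with ⟨-, h⟩ | ⟨h1, h2⟩
        · exact h
        · exact absurd h1 huw2
      subst hweq
      have he1 : s(u1, v1) ∈ G.edgeSet := G.mem_edgeSet.mpr (ht1.isClique hu1 hv1 huv1)
      have he2 : s(u1, v2) ∈ G.edgeSet := G.mem_edgeSet.mpr (ht2.isClique hu2 hv2 huv2)
      have heedge : s(u1, v1) = s(u1, v2) :=
        hffinj _ he1 _ he2 hidxeq (by rw [hffe1, hffe2])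
      have hveq : v1 = v2 := by
        rcases Sym2.eq_iff.mp heedge with ⟨-, h⟩ | ⟨h1, h2⟩
        · exact h
        · exact absurd h1 huv2
      subst hveq
      have hteq : t1 = t2 := by
        have hcard : ({u1, v1, w1} : Finset V).card = 3 := by
          rw [Finset.card_insert_of_notMem (by simp [huv1, huw1]),
            Finset.card_insert_of_notMem (by simp [hvw1]), Finset.card_singleton]
        have hsub1 : ({u1, v1, w1} : Finset V) ⊆ t1 := by
          intro x hx; simp only [Finset.mem_insert, Finset.mem_singleton] at hx
          rcases hx with rfl | rfl | rfl <;> assumption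
        have hsub2 : ({u1, v1, w1} : Finset V) ⊆ t2 := by
          intro x hx; simp only [Finset.mem_insert, Finset.mem_singleton] at hx
          rcases hx with rfl | rfl | rfl <;> assumption
        rw [← Finset.eq_of_subset_of_card_le hsub1 (by rw [ht1.card_eq, hcard]),
          ← Finset.eq_of_subset_of_card_le hsub2 (by rw [ht2.card_eq, hcard])]
      subst hteq
      rfl
  -- put it together
  have hnat : (G.cliqueFinset 3).card * 3 ≤ k * (G.edgeFinset.card * 2) := by
    calc (G.cliqueFinset 3).card * 3 ≤ S.card := hlower
      _ ≤ Tgt.card := hupper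
      _ = k * (G.edgeFinset.card * 2) := hTgtcard
  have hreal : ((G.cliqueFinset 3).card : ℝ) * 3 ≤ (k : ℝ) * ((G.edgeFinset.card : ℝ) * 2) := by
    exact_mod_cast hnat
  linarith
end

section
/- For every integer k ≥ 1 and every even integer b ≥ 2, there exists a finite simple graph G on n = (2k+1)·b/2 vertices with exactly m = k·C(b,2) + k·b²/2 edges such that the edge set of G can be partitioned into at most b subsets each forming an acyclic subgraph (a forest) on the vertex set of G, and the number of triangles of G is at least k·C(b,3) + k·C(b,2)·(b/2). -/
open SimpleGraph Finset


/-- In a cycle, the basepoint has two distinct neighbors among the tail of the support. -/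
lemma cycle_two_neighbors {V : Type*} {G : SimpleGraph V} {u : V} (cw : G.Walk u u)
    (hc : cw.IsCycle) : ∃ w x, w ≠ x ∧ G.Adj u w ∧ G.Adj u x ∧
      w ∈ cw.support.tail ∧ x ∈ cw.support.tail := by
  cases cw with
  | nil => exact absurd rfl hc.ne_nil
  | cons h' q =>
    rename_i w
    rw [SimpleGraph.Walk.cons_isCycle_iff] at hc
    obtain ⟨x, h2, q2, heq⟩ := SimpleGraph.Walk.exists_eq_cons_of_ne h'.ne q.reverse
    have hxe : s(u, x) ∈ q.edges := by
      have : s(u, x) ∈ q.reverse.edges := by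
        rw [heq]; simp
      rwa [SimpleGraph.Walk.edges_reverse, List.mem_reverse] at this
    have hwx : w ≠ x := by
      rintro rfl
      exact hc.2 hxe
    have hxs : x ∈ q.support := by
      have : x ∈ q.reverse.support := by
        rw [heq]; simp
      rwa [SimpleGraph.Walk.support_reverse, List.mem_reverse] at this
    exact ⟨w, x, hwx, h', h2, by simp, by simp [hxs]⟩

theorem acyclic_of_height {V : Type*} (G : SimpleGraph V) (p : V → ℕ)
    (hp : Function.Injective p)
    (h : ∀ v, {w | G.Adj v w ∧ p v < p w}.Subsingleton) : G.IsAcyclic := by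
  intro v cw hc
  classical
  -- choose the vertex of minimal height on the cycle
  have hne : cw.support.tail ≠ [] := by
    have h3 := hc.three_le_length
    cases cw with
    | nil => simp at h3
    | cons h q => simp [SimpleGraph.Walk.support_cons]
  have hne' : cw.support.tail.toFinset.Nonempty := by
    rw [Finset.nonempty_iff_ne_empty]; simpa using hne
  obtain ⟨u, hu, hmin⟩ := Finset.exists_min_image _ p hne'
  simp only [List.mem_toFinset] at hu
  have hu' : u ∈ cw.support := List.mem_of_mem_tail hu
  obtain ⟨w, x, hwx, haw, hax, hws, hxs⟩ := cycle_two_neighbors _ (hc.rotate hu')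
  have hperm := SimpleGraph.Walk.support_rotate cw u hu'
  have hws' : w ∈ cw.support.tail := hperm.mem_iff.1 hws
  have hxs' : x ∈ cw.support.tail := hperm.mem_iff.1 hxs
  have hpw : p u < p w :=
    lt_of_le_of_ne (hmin w (List.mem_toFinset.2 hws')) (fun e => haw.ne (hp e))
  have hpx : p u < p x :=
    lt_of_le_of_ne (hmin x (List.mem_toFinset.2 hxs')) (fun e => hax.ne (hp e))
  exact hwx (h u ⟨haw, hpw⟩ ⟨hax, hpx⟩)

section Construction

variable (k c : ℕ)

/-- The graph: `k` disjoint copies of `K_{2c}` (vertices `< 2kc`, clique = `val / 2c`),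
plus `c` apex vertices (vertices `≥ 2kc`) joined to all clique vertices. -/
def myG : SimpleGraph (Fin (2*k*c+c)) where
  Adj x y := (x:ℕ) ≠ (y:ℕ) ∧
    (((x:ℕ)/(2*c) = (y:ℕ)/(2*c) ∧ (x:ℕ) < k*(2*c) ∧ (y:ℕ) < k*(2*c)) ∨
     ((x:ℕ) < k*(2*c) ∧ k*(2*c) ≤ (y:ℕ)) ∨
     (k*(2*c) ≤ (x:ℕ) ∧ (y:ℕ) < k*(2*c)))
  symm := by
    constructor
    intro x y ⟨h1, h2⟩
    exact ⟨fun e => h1 e.symm, by tauto⟩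
  loopless := by constructor; intro x ⟨h, _⟩; exact h rfl

instance : DecidableRel (myG k c).Adj := fun x y =>
  inferInstanceAs (Decidable (_ ∧ _))

lemma myG_adj {x y : Fin (2*k*c+c)} : (myG k c).Adj x y ↔ ((x:ℕ) ≠ (y:ℕ) ∧
    (((x:ℕ)/(2*c) = (y:ℕ)/(2*c) ∧ (x:ℕ) < k*(2*c) ∧ (y:ℕ) < k*(2*c)) ∨
     ((x:ℕ) < k*(2*c) ∧ k*(2*c) ≤ (y:ℕ)) ∨
     (k*(2*c) ≤ (x:ℕ) ∧ (y:ℕ) < k*(2*c)))) := Iff.rfl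

end Construction

/-- counting: number of `y : Fin n` with `a ≤ y < d`. -/
lemma card_Ico_fin (n a d : ℕ) (hd : d ≤ n) :
    ((Finset.univ : Finset (Fin n)).filter (fun y : Fin n => a ≤ (y:ℕ) ∧ (y:ℕ) < d)).card
      = d - a := by
  rw [← Finset.card_range (d - a)]
  refine Finset.card_bij' (fun y _ => (y:ℕ) - a)
    (fun m hm => (⟨a + m, by simp only [Finset.mem_range] at hm; omega⟩ : Fin n)) ?_ ?_ ?_ ?_
  · intro y hy; simp only [Finset.mem_filter] at hy; simp only [Finset.mem_range]; omega
  · intro m hm; simp only [Finset.mem_range] at hm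
    simp only [Finset.mem_filter, Finset.mem_univ, true_and]; omega
  · intro y hy; simp only [Finset.mem_filter] at hy; apply Fin.ext; simp; omega
  · intro m hm; simp only [Finset.mem_range] at hm; simp

lemma div_eq_iff' (m t d : ℕ) (hd : 0 < d) : m / d = t ↔ (t*d ≤ m ∧ m < t*d + d) := by
  constructor
  · rintro rfl
    have h1 := Nat.div_add_mod' m d
    have h2 := Nat.mod_lt m hd
    omega
  · rintro ⟨h1, h2⟩
    have hle : t ≤ m / d := (Nat.le_div_iff_mul_le hd).2 h1
    have hlt : m / d < t + 1 := (Nat.div_lt_iff_lt_mul hd).2 (by rw [Nat.succ_mul]; omega)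
    omega

section Degrees

variable (k c : ℕ)

lemma deg_s (hc : 1 ≤ c) (x : Fin (2*k*c+c)) (hx : k*(2*c) ≤ (x:ℕ)) :
    (myG k c).degree x = k*(2*c) := by
  rw [SimpleGraph.degree, SimpleGraph.neighborFinset_eq_filter]
  have he : (Finset.univ.filter ((myG k c).Adj x)) =
      Finset.univ.filter (fun y : Fin (2*k*c+c) => 0 ≤ (y:ℕ) ∧ (y:ℕ) < k*(2*c)) := by
    apply Finset.filter_congr
    intro y _
    simp only [myG_adj, iff_def]
    constructor
    · rintro ⟨hne, (⟨_, hxlt, _⟩ | ⟨hxlt, _⟩ | ⟨_, hylt⟩)⟩ <;> omega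
    · rintro ⟨_, hy⟩
      exact ⟨by omega, Or.inr (Or.inr ⟨hx, hy⟩)⟩
  rw [he, card_Ico_fin _ 0 _ (by omega)]
  omega

lemma deg_clique (hc : 1 ≤ c) (x : Fin (2*k*c+c)) (hx : (x:ℕ) < k*(2*c)) :
    (myG k c).degree x = (2*c - 1) + c := by
  have h2c : 0 < 2*c := by omega
  set t := (x:ℕ)/(2*c) with ht
  have htk : t < k := (Nat.div_lt_iff_lt_mul h2c).2 hx
  have hxb : t*(2*c) ≤ (x:ℕ) ∧ (x:ℕ) < t*(2*c) + 2*c := (div_eq_iff' _ _ _ h2c).1 rfl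
  rw [SimpleGraph.degree, SimpleGraph.neighborFinset_eq_filter]
  have he : (Finset.univ.filter ((myG k c).Adj x)) =
      ((Finset.univ.filter (fun y : Fin (2*k*c+c) =>
          t*(2*c) ≤ (y:ℕ) ∧ (y:ℕ) < t*(2*c) + 2*c)).erase x) ∪
      Finset.univ.filter (fun y : Fin (2*k*c+c) => k*(2*c) ≤ (y:ℕ) ∧ (y:ℕ) < 2*k*c+c) := by
    ext y
    simp only [Finset.mem_union, Finset.mem_erase, Finset.mem_filter, Finset.mem_univ,
      true_and, myG_adj]
    constructor
    · rintro ⟨hne, (⟨hdiv, _, hylt⟩ | ⟨hxlt, hyge⟩ | ⟨hxge, _⟩)⟩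
      · left
        refine ⟨fun e => hne (by rw [e]), ?_⟩
        have := (div_eq_iff' (y:ℕ) t (2*c) h2c).1 (by omega)
        omega
      · right; exact ⟨hyge, y.isLt⟩
      · omega
    · rintro (⟨hne, hyb⟩ | ⟨hyge, _⟩)
      · have hyd : (y:ℕ)/(2*c) = t := (div_eq_iff' _ _ _ h2c).2 hyb
        have hylt : (y:ℕ) < k*(2*c) := by
          have := (Nat.div_lt_iff_lt_mul h2c).1 (by omega : (y:ℕ)/(2*c) < k)
          omega
        refine ⟨fun e => hne (Fin.ext e.symm), Or.inl ⟨by omega, hx, hylt⟩⟩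
      · exact ⟨by omega, Or.inr (Or.inl ⟨hx, hyge⟩)⟩
  have hcap : t*(2*c) + 2*c ≤ 2*k*c := by
    have h1 : t + 1 ≤ k := htk
    calc t*(2*c) + 2*c = (t+1)*(2*c) := by ring
      _ ≤ k*(2*c) := Nat.mul_le_mul_right _ h1
      _ = 2*k*c := by ring
  have hmem : x ∈ Finset.univ.filter (fun y : Fin (2*k*c+c) =>
      t*(2*c) ≤ (y:ℕ) ∧ (y:ℕ) < t*(2*c) + 2*c) := by
    simp only [Finset.mem_filter, Finset.mem_univ, true_and]; omega
  have hdisj : Disjoint ((Finset.univ.filter (fun y : Fin (2*k*c+c) =>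
      t*(2*c) ≤ (y:ℕ) ∧ (y:ℕ) < t*(2*c) + 2*c)).erase x)
      (Finset.univ.filter (fun y : Fin (2*k*c+c) => k*(2*c) ≤ (y:ℕ) ∧ (y:ℕ) < 2*k*c+c)) := by
    rw [Finset.disjoint_left]
    rintro y hy1 hy2
    simp only [Finset.mem_erase, Finset.mem_filter, Finset.mem_univ, true_and] at hy1 hy2
    have e1 : k*(2*c) = 2*k*c := by ring
    omega
  rw [he, Finset.card_union_of_disjoint hdisj, Finset.card_erase_of_mem hmem,
    card_Ico_fin _ _ _ (by omega), card_Ico_fin _ _ _ (le_refl _)]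
  have e1 : k*(2*c) = 2*k*c := by ring
  omega

end Degrees

lemma edge_count (k c : ℕ) (hk : 1 ≤ k) (hc : 1 ≤ c) :
    (myG k c).edgeFinset.card = k * ((2*c).choose 2) + k * ((2*c)^2/2) := by
  obtain ⟨c', rfl⟩ : ∃ c', c = c'+1 := ⟨c-1, by omega⟩
  set c := c'+1
  have hsum := SimpleGraph.sum_degrees_eq_twice_card_edges (myG k c)
  rw [← Finset.sum_filter_add_sum_filter_not Finset.univ
    (fun v : Fin (2*k*c+c) => (v:ℕ) < k*(2*c))] at hsum
  have h1 : ∑ v ∈ Finset.univ.filter (fun v : Fin (2*k*c+c) => (v:ℕ) < k*(2*c)),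
      (myG k c).degree v = (k*(2*c)) * ((2*c-1)+c) := by
    rw [Finset.sum_congr rfl (fun x hx => deg_clique k c (by omega) x
      (by simpa using (Finset.mem_filter.1 hx).2)), Finset.sum_const, smul_eq_mul]
    congr 1
    have he : Finset.univ.filter (fun v : Fin (2*k*c+c) => (v:ℕ) < k*(2*c)) =
        Finset.univ.filter (fun v : Fin (2*k*c+c) => 0 ≤ (v:ℕ) ∧ (v:ℕ) < k*(2*c)) := by
      apply Finset.filter_congr; intro y _; simp
    have e1 : k*(2*c) = 2*k*c := by ring
    rw [he, card_Ico_fin _ 0 _ (by omega)]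
    omega
  have h2 : ∑ v ∈ Finset.univ.filter (fun v : Fin (2*k*c+c) => ¬ (v:ℕ) < k*(2*c)),
      (myG k c).degree v = c * (k*(2*c)) := by
    rw [Finset.sum_congr rfl (fun x hx => deg_s k c (by omega) x
      (by have := (Finset.mem_filter.1 hx).2; omega)), Finset.sum_const, smul_eq_mul]
    congr 1
    have he : Finset.univ.filter (fun v : Fin (2*k*c+c) => ¬ (v:ℕ) < k*(2*c)) =
        Finset.univ.filter (fun v : Fin (2*k*c+c) => k*(2*c) ≤ (v:ℕ) ∧ (v:ℕ) < 2*k*c+c) := by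
      apply Finset.filter_congr; intro y _
      have := y.isLt
      constructor
      · intro h; simp at h ⊢; omega
      · intro h; simp at h ⊢; omega
    have e1 : k*(2*c) = 2*k*c := by ring
    rw [he, card_Ico_fin _ _ _ (le_refl _)]
    omega
  rw [h1, h2] at hsum
  have hch2 : (2*c).choose 2 = c*(2*c'+1) := by
    rw [Nat.choose_two_right, show 2*c-1 = 2*c'+1 by omega,
      show (2*c)*(2*c'+1) = 2*(c*(2*c'+1)) by ring, Nat.mul_div_cancel_left _ two_pos]
  have hpow : (2*c)^2/2 = 2*c^2 := by
    rw [show (2*c)^2 = 2*(2*c^2) by ring, Nat.mul_div_cancel_left _ two_pos]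
  rw [hch2, hpow]
  apply Nat.eq_of_mul_eq_mul_left (show 0 < 2 by norm_num)
  rw [← hsum, show 2*c-1 = 2*c'+1 by omega]
  ring

/-! ### The forest decomposition -/

/-- color of a pair of vertices -/
def colv (k c : ℕ) (x y : Fin (2*k*c+c)) : ℕ :=
  if k*(2*c) ≤ (x:ℕ) ∧ k*(2*c) ≤ (y:ℕ) then 0
  else if k*(2*c) ≤ (x:ℕ) then c + ((x:ℕ) - k*(2*c))
  else if k*(2*c) ≤ (y:ℕ) then c + ((y:ℕ) - k*(2*c))
  else (((x:ℕ) % (2*c) + (y:ℕ) % (2*c)) % (2*c)) / 2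

lemma colv_symm (k c : ℕ) (x y : Fin (2*k*c+c)) : colv k c x y = colv k c y x := by
  unfold colv
  rw [Nat.add_comm ((x:ℕ) % (2*c))]
  split_ifs <;> first | rfl | omega

def col (k c : ℕ) : Sym2 (Fin (2*k*c+c)) → ℕ :=
  Sym2.lift ⟨fun x y => colv k c x y, fun x y => colv_symm k c x y⟩

lemma col_mk (k c : ℕ) (x y : Fin (2*k*c+c)) : col k c s(x,y) = colv k c x y := rfl

def Fam (k c : ℕ) (i : ℕ) : Set (Sym2 (Fin (2*k*c+c))) :=
  {e | e ∈ (myG k c).edgeSet ∧ col k c e = i}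

/-- the piecewise-linear "position along the Hamiltonian path" function -/
def Q (c m : ℕ) : ℕ := if m = 0 then 0 else if m ≤ c then 2*m-1 else 2*(2*c-m)

lemma Q_lt (c m : ℕ) (hc : 1 ≤ c) (hm : m < 2*c) : Q c m < 2*c := by
  unfold Q; split_ifs <;> omega

lemma Q_inj (c m1 m2 : ℕ) (h1 : m1 < 2*c) (h2 : m2 < 2*c) (he : Q c m1 = Q c m2) :
    m1 = m2 := by
  unfold Q at he; split_ifs at he <;> omega

/-- the shift `l ↦ (l - i) mod 2c` -/
def sh (c i l : ℕ) : ℕ := (l + 2*c - i) % (2*c)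

lemma sh_lt (c i l : ℕ) (hc : 1 ≤ c) : sh c i l < 2*c := Nat.mod_lt _ (by omega)

lemma sh_inj (c i l1 l2 : ℕ) (hc : 1 ≤ c) (hi : i ≤ 2*c) (h1 : l1 < 2*c) (h2 : l2 < 2*c)
    (he : sh c i l1 = sh c i l2) : l1 = l2 := by
  have key : ∀ l, l < 2*c → (sh c i l + i) % (2*c) = l := by
    intro l hl
    unfold sh
    rw [Nat.mod_add_mod, show l + 2*c - i + i = l + 2*c by omega, Nat.add_mod_right,
      Nat.mod_eq_of_lt hl]
  rw [← key l1 h1, ← key l2 h2, he]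

lemma unique_div_mod {n a b r s : ℕ} (hn : 0 < n) (hr : r < n) (hs : s < n)
    (h : a*n + r = b*n + s) : a = b ∧ r = s := by
  have h1 : (a*n + r)/n = a := by
    rw [Nat.mul_comm, Nat.mul_add_div hn, Nat.div_eq_of_lt hr, Nat.add_zero]
  have h2 : (b*n + s)/n = b := by
    rw [Nat.mul_comm, Nat.mul_add_div hn, Nat.div_eq_of_lt hs, Nat.add_zero]
  have hab : a = b := by rw [← h1, h, h2]
  subst hab
  exact ⟨rfl, by omega⟩

lemma sum_shift (c i l lz : ℕ) (hi : i ≤ 2*c) :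
    (sh c i l + sh c i lz + 2*i) % (2*c) = (l + lz) % (2*c) := by
  unfold sh
  have h := (((Nat.mod_modEq (l + 2*c - i) (2*c)).add
    (Nat.mod_modEq (lz + 2*c - i) (2*c))).add_right (2*i))
  rw [show (l + 2*c - i) + (lz + 2*c - i) + 2*i = (l + lz) + 2*(2*c) by omega] at h
  unfold Nat.ModEq at h
  rw [Nat.add_mul_mod_self_right] at h
  exact h

lemma mod_window (c s i a : ℕ) (hc : 1 ≤ c) (hs : s < 4*c) (hi2 : 2*i < 2*c) (ha : a < 2*c)
    (h : (s + 2*i) % (2*c) = a) :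
    s + 2*i = a ∨ s + 2*i = 2*c + a ∨ s + 2*i = 4*c + a := by
  have hd := Nat.div_add_mod (s + 2*i) (2*c)
  rw [h] at hd
  set u := (s + 2*i) / (2*c) with hu
  have hub : u ≤ 2 := by
    by_contra hcon
    push_neg at hcon
    have : 2*c*3 ≤ 2*c*u := Nat.mul_le_mul_left _ hcon
    omega
  interval_cases u <;> omega

lemma key_arith (c m m1 m2 : ℕ) (hc : 1 ≤ c)
    (hm : m < 2*c) (hm1 : m1 < 2*c) (hm2 : m2 < 2*c)
    (h1 : m + m1 = 0 ∨ m + m1 = 1 ∨ m + m1 = 2*c ∨ m + m1 = 2*c+1)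
    (h2 : m + m2 = 0 ∨ m + m2 = 1 ∨ m + m2 = 2*c ∨ m + m2 = 2*c+1)
    (hne1 : m1 ≠ m) (hne2 : m2 ≠ m)
    (hq1 : Q c m < Q c m1) (hq2 : Q c m < Q c m2) : m1 = m2 := by
  unfold Q at hq1 hq2; split_ifs at hq1 hq2 <;> omega

lemma fam_struct (k c : ℕ) (hc : 1 ≤ c) (i : ℕ) (hi : i < c) {x z : Fin (2*k*c+c)}
    (h : s(x,z) ∈ Fam k c i) :
    (x:ℕ) < k*(2*c) ∧ (z:ℕ) < k*(2*c) ∧ (x:ℕ)/(2*c) = (z:ℕ)/(2*c) ∧ (x:ℕ) ≠ (z:ℕ) ∧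
      (((x:ℕ) % (2*c) + (z:ℕ) % (2*c)) % (2*c))/2 = i := by
  obtain ⟨he, hcol⟩ := h
  rw [SimpleGraph.mem_edgeSet, myG_adj] at he
  rw [col_mk] at hcol
  unfold colv at hcol
  obtain ⟨hne, (⟨hdiv, hx, hz⟩ | ⟨hx, hz⟩ | ⟨hx, hz⟩)⟩ := he
  · rw [if_neg (by omega), if_neg (by omega), if_neg (by omega)] at hcol
    exact ⟨hx, hz, hdiv, hne, hcol⟩
  · rw [if_neg (by omega), if_neg (by omega), if_pos hz] at hcol
    omega
  · rw [if_neg (by omega), if_pos hx] at hcol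
    omega

lemma fam_path_acyclic (k c : ℕ) (hc : 1 ≤ c) (i : ℕ) (hi : i < c) :
    (SimpleGraph.fromEdgeSet (Fam k c i)).IsAcyclic := by
  apply acyclic_of_height _ (p := fun w : Fin (2*k*c+c) =>
    if (w:ℕ) < k*(2*c) then ((w:ℕ)/(2*c))*(2*c) + Q c (sh c i ((w:ℕ) % (2*c))) else (w:ℕ))
  · -- injectivity
    intro z1 z2 h
    simp only at h
    have h2c : 0 < 2*c := by omega
    by_cases h1 : (z1:ℕ) < k*(2*c) <;> by_cases h2 : (z2:ℕ) < k*(2*c)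
    · rw [if_pos h1, if_pos h2] at h
      obtain ⟨hdiv, hQ⟩ := unique_div_mod h2c
        (Q_lt c _ hc (sh_lt c i _ hc)) (Q_lt c _ hc (sh_lt c i _ hc)) h
      have hsh := Q_inj c _ _ (sh_lt c i _ hc) (sh_lt c i _ hc) hQ
      have hl : (z1:ℕ) % (2*c) = (z2:ℕ) % (2*c) :=
        sh_inj c i _ _ hc (by omega) (Nat.mod_lt _ h2c) (Nat.mod_lt _ h2c) hsh
      apply Fin.ext
      rw [← Nat.div_add_mod' (z1:ℕ) (2*c), ← Nat.div_add_mod' (z2:ℕ) (2*c), hdiv, hl]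
    · rw [if_pos h1, if_neg h2] at h
      exfalso
      have ht : (z1:ℕ)/(2*c) < k := (Nat.div_lt_iff_lt_mul h2c).2 h1
      have : ((z1:ℕ)/(2*c))*(2*c) + Q c (sh c i ((z1:ℕ) % (2*c))) < k*(2*c) := by
        have hQ := Q_lt c (sh c i ((z1:ℕ) % (2*c))) hc (sh_lt c i _ hc)
        calc ((z1:ℕ)/(2*c))*(2*c) + Q c (sh c i ((z1:ℕ) % (2*c)))
            < ((z1:ℕ)/(2*c) + 1)*(2*c) := by rw [Nat.add_mul]; omega
          _ ≤ k*(2*c) := Nat.mul_le_mul_right _ (by omega)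
      omega
    · rw [if_neg h1, if_pos h2] at h
      exfalso
      have ht : (z2:ℕ)/(2*c) < k := (Nat.div_lt_iff_lt_mul h2c).2 h2
      have : ((z2:ℕ)/(2*c))*(2*c) + Q c (sh c i ((z2:ℕ) % (2*c))) < k*(2*c) := by
        have hQ := Q_lt c (sh c i ((z2:ℕ) % (2*c))) hc (sh_lt c i _ hc)
        calc ((z2:ℕ)/(2*c))*(2*c) + Q c (sh c i ((z2:ℕ) % (2*c)))
            < ((z2:ℕ)/(2*c) + 1)*(2*c) := by rw [Nat.add_mul]; omega
          _ ≤ k*(2*c) := Nat.mul_le_mul_right _ (by omega)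
      omega
    · rw [if_neg h1, if_neg h2] at h
      exact Fin.ext h
  · -- up-neighbors subsingleton
    intro x z1 hz1 z2 hz2
    simp only [Set.mem_setOf_eq, SimpleGraph.fromEdgeSet_adj] at hz1 hz2
    obtain ⟨⟨hm1, _⟩, hp1⟩ := hz1
    obtain ⟨⟨hm2, _⟩, hp2⟩ := hz2
    have hs1 := fam_struct k c hc i hi hm1
    have hs2 := fam_struct k c hc i hi hm2
    obtain ⟨hx, hz1lt, hdiv1, hne1, hcol1⟩ := hs1
    obtain ⟨-, hz2lt, hdiv2, hne2, hcol2⟩ := hs2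
    have h2c : 0 < 2*c := by omega
    -- reduce the height comparison to Q-values
    have hq1 : Q c (sh c i ((x:ℕ) % (2*c))) < Q c (sh c i ((z1:ℕ) % (2*c))) := by
      simp only [if_pos hx, if_pos hz1lt, ← hdiv1] at hp1
      omega
    have hq2 : Q c (sh c i ((x:ℕ) % (2*c))) < Q c (sh c i ((z2:ℕ) % (2*c))) := by
      simp only [if_pos hx, if_pos hz2lt, ← hdiv2] at hp2
      omega
    -- the mod 2c sum facts
    have key : ∀ z : Fin (2*k*c+c), (x:ℕ)/(2*c) = (z:ℕ)/(2*c) →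
        (((x:ℕ) % (2*c) + (z:ℕ) % (2*c)) % (2*c))/2 = i →
        sh c i ((x:ℕ) % (2*c)) + sh c i ((z:ℕ) % (2*c)) = 0 ∨
        sh c i ((x:ℕ) % (2*c)) + sh c i ((z:ℕ) % (2*c)) = 1 ∨
        sh c i ((x:ℕ) % (2*c)) + sh c i ((z:ℕ) % (2*c)) = 2*c ∨
        sh c i ((x:ℕ) % (2*c)) + sh c i ((z:ℕ) % (2*c)) = 2*c + 1 := by
      intro z hdiv hcol
      set a := ((x:ℕ) % (2*c) + (z:ℕ) % (2*c)) % (2*c) with hadef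
      have ha : a < 2*c := Nat.mod_lt _ h2c
      have ha2 : a = 2*i ∨ a = 2*i + 1 := by omega
      have hss := sum_shift c i ((x:ℕ) % (2*c)) ((z:ℕ) % (2*c)) (by omega)
      rw [← hadef] at hss
      have hwin := mod_window c (sh c i ((x:ℕ) % (2*c)) + sh c i ((z:ℕ) % (2*c))) i a hc
        (by have := sh_lt c i ((x:ℕ) % (2*c)) hc; have := sh_lt c i ((z:ℕ) % (2*c)) hc; omega)
        (by omega) ha hss
      have hb1 := sh_lt c i ((x:ℕ) % (2*c)) hc
      have hb2 := sh_lt c i ((z:ℕ) % (2*c)) hc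
      omega
    have hk1 := key z1 hdiv1 hcol1
    have hk2 := key z2 hdiv2 hcol2
    -- the ≠ facts
    have hnz : ∀ z : Fin (2*k*c+c), (x:ℕ)/(2*c) = (z:ℕ)/(2*c) → (x:ℕ) ≠ (z:ℕ) →
        sh c i ((z:ℕ) % (2*c)) ≠ sh c i ((x:ℕ) % (2*c)) := by
      intro z hdiv hne he
      have hl : (z:ℕ) % (2*c) = (x:ℕ) % (2*c) :=
        sh_inj c i _ _ hc (by omega) (Nat.mod_lt _ h2c) (Nat.mod_lt _ h2c) he
      apply hne
      rw [← Nat.div_add_mod' (x:ℕ) (2*c), ← Nat.div_add_mod' (z:ℕ) (2*c), hdiv, hl]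
    have hmm := key_arith c (sh c i ((x:ℕ) % (2*c))) (sh c i ((z1:ℕ) % (2*c)))
      (sh c i ((z2:ℕ) % (2*c))) hc (sh_lt c i _ hc) (sh_lt c i _ hc) (sh_lt c i _ hc)
      hk1 hk2 (hnz z1 hdiv1 hne1) (hnz z2 hdiv2 hne2) hq1 hq2
    have hl : (z1:ℕ) % (2*c) = (z2:ℕ) % (2*c) :=
      sh_inj c i _ _ hc (by omega) (Nat.mod_lt _ h2c) (Nat.mod_lt _ h2c) hmm
    apply Fin.ext
    have hdd : (z1:ℕ)/(2*c) = (z2:ℕ)/(2*c) := by rw [← hdiv1, ← hdiv2]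
    rw [← Nat.div_add_mod' (z1:ℕ) (2*c), ← Nat.div_add_mod' (z2:ℕ) (2*c), hdd, hl]

lemma fam_star_mem (k c : ℕ) (hc : 1 ≤ c) (i : ℕ) (hi1 : c ≤ i) (hi2 : i < 2*c)
    {x z : Fin (2*k*c+c)} (h : s(x,z) ∈ Fam k c i) :
    x = (⟨2*k*c + (i - c), by omega⟩ : Fin (2*k*c+c)) ∨
    z = (⟨2*k*c + (i - c), by omega⟩ : Fin (2*k*c+c)) := by
  obtain ⟨he, hcol⟩ := h
  rw [SimpleGraph.mem_edgeSet, myG_adj] at he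
  rw [col_mk] at hcol
  unfold colv at hcol
  have e1 : k*(2*c) = 2*k*c := by ring
  obtain ⟨hne, (⟨hdiv, hx, hz⟩ | ⟨hx, hz⟩ | ⟨hx, hz⟩)⟩ := he
  · exfalso
    rw [if_neg (by omega), if_neg (by omega), if_neg (by omega)] at hcol
    have ha : ((x:ℕ) % (2*c) + (z:ℕ) % (2*c)) % (2*c) < 2*c := Nat.mod_lt _ (by omega)
    omega
  · right
    rw [if_neg (by omega), if_neg (by omega), if_pos hz] at hcol
    apply Fin.ext
    simp only [Fin.val_mk]
    omega
  · left
    rw [if_neg (by omega), if_pos hx] at hcol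
    apply Fin.ext
    simp only [Fin.val_mk]
    omega

lemma fam_star_acyclic (k c : ℕ) (hc : 1 ≤ c) (i : ℕ) (hi1 : c ≤ i) (hi2 : i < 2*c) :
    (SimpleGraph.fromEdgeSet (Fam k c i)).IsAcyclic := by
  set v0 : Fin (2*k*c+c) := ⟨2*k*c + (i - c), by omega⟩ with hv0
  apply acyclic_of_height _ (p := fun w : Fin (2*k*c+c) =>
    if w = v0 then 2*k*c+c else (w:ℕ))
  · intro z1 z2 h
    simp only at h
    by_cases h1 : z1 = v0 <;> by_cases h2 : z2 = v0
    · rw [h1, h2]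
    · rw [if_pos h1, if_neg h2] at h
      have := z2.isLt; omega
    · rw [if_neg h1, if_pos h2] at h
      have := z1.isLt; omega
    · rw [if_neg h1, if_neg h2] at h
      exact Fin.ext h
  · intro x z1 hz1 z2 hz2
    simp only [Set.mem_setOf_eq, SimpleGraph.fromEdgeSet_adj] at hz1 hz2
    obtain ⟨⟨hm1, hne1⟩, hp1⟩ := hz1
    obtain ⟨⟨hm2, hne2⟩, hp2⟩ := hz2
    have hst1 := fam_star_mem k c hc i hi1 hi2 hm1
    have hst2 := fam_star_mem k c hc i hi1 hi2 hm2
    rw [← hv0] at hst1 hst2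
    -- if x = v0 then p x is maximal, contradiction
    by_cases hx : x = v0
    · exfalso
      rw [if_pos hx] at hp1
      have hz1v : z1 ≠ v0 := fun e => hne1 (hx.trans e.symm)
      rw [if_neg hz1v] at hp1
      have := z1.isLt; omega
    · have h1 : z1 = v0 := hst1.resolve_left hx
      have h2 : z2 = v0 := hst2.resolve_left hx
      rw [h1, h2]

lemma fam_disjoint (k c : ℕ) : Pairwise (Function.onFun Disjoint
    (fun i : Fin (2*c) => Fam k c (i:ℕ))) := by
  intro i j hij
  simp only [Function.onFun]
  rw [Set.disjoint_left]
  rintro e ⟨-, h1⟩ ⟨-, h2⟩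
  exact hij (Fin.ext (by rw [← h1, ← h2]))

lemma fam_union (k c : ℕ) (hc : 1 ≤ c) :
    ⋃ i : Fin (2*c), Fam k c (i:ℕ) = (myG k c).edgeSet := by
  apply Set.eq_of_subset_of_subset
  · intro e he
    rw [Set.mem_iUnion] at he
    obtain ⟨i, hi, -⟩ := he
    exact hi
  · intro e he
    have hlt : col k c e < 2*c := by
      induction e using Sym2.ind with
      | _ x y =>
        rw [SimpleGraph.mem_edgeSet, myG_adj] at he
        rw [col_mk]
        unfold colv
        obtain ⟨hne, (⟨hdiv, hx, hy⟩ | ⟨hx, hy⟩ | ⟨hx, hy⟩)⟩ := he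
        · rw [if_neg (by omega), if_neg (by omega), if_neg (by omega)]
          have ha : ((x:ℕ) % (2*c) + (y:ℕ) % (2*c)) % (2*c) < 2*c := Nat.mod_lt _ (by omega)
          omega
        · rw [if_neg (by omega), if_neg (by omega), if_pos hy]
          have := y.isLt
          have e1 : k*(2*c) = 2*k*c := by ring
          omega
        · rw [if_neg (by omega), if_pos hx]
          have := x.isLt
          have e1 : k*(2*c) = 2*k*c := by ring
          omega
    rw [Set.mem_iUnion]
    exact ⟨⟨col k c e, hlt⟩, he, rfl⟩

/-! ### Triangles -/

def vmk (k c : ℕ) (hc : 1 ≤ c) (m : ℕ) : Fin (2*k*c+c) :=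
  ⟨m % (2*k*c+c), Nat.mod_lt _ (by omega)⟩

lemma vmk_val (k c : ℕ) (hc : 1 ≤ c) (m : ℕ) (h : m < 2*k*c+c) :
    ((vmk k c hc m : Fin (2*k*c+c)) : ℕ) = m := Nat.mod_eq_of_lt h

lemma tl_lt (k c t l : ℕ) (ht : t < k) (hl : l < 2*c) : t*(2*c) + l < k*(2*c) :=
  calc t*(2*c) + l < (t+1)*(2*c) := by rw [Nat.add_mul]; omega
    _ ≤ k*(2*c) := Nat.mul_le_mul_right _ (by omega)

lemma tl_lt' (k c t l : ℕ) (ht : t < k) (hl : l < 2*c) : t*(2*c) + l < 2*k*c+c := by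
  have := tl_lt k c t l ht hl
  have e1 : k*(2*c) = 2*k*c := by ring
  omega

lemma tl_div (k c t l : ℕ) (hc : 1 ≤ c) (hl : l < 2*c) : (t*(2*c) + l)/(2*c) = t := by
  rw [Nat.mul_comm t, Nat.mul_add_div (by omega), Nat.div_eq_of_lt hl, Nat.add_zero]

lemma adj_clique (k c : ℕ) (hc : 1 ≤ c) (t l1 l2 : ℕ) (ht : t < k) (h1 : l1 < 2*c)
    (h2 : l2 < 2*c) (hne : l1 ≠ l2) :
    (myG k c).Adj (vmk k c hc (t*(2*c)+l1)) (vmk k c hc (t*(2*c)+l2)) := by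
  rw [myG_adj, vmk_val k c hc _ (tl_lt' k c t l1 ht h1),
    vmk_val k c hc _ (tl_lt' k c t l2 ht h2)]
  exact ⟨by omega, Or.inl ⟨by rw [tl_div k c t l1 hc h1, tl_div k c t l2 hc h2],
    tl_lt k c t l1 ht h1, tl_lt k c t l2 ht h2⟩⟩

lemma adj_apex (k c : ℕ) (hc : 1 ≤ c) (t l j : ℕ) (ht : t < k) (hl : l < 2*c) (hj : j < c) :
    (myG k c).Adj (vmk k c hc (t*(2*c)+l)) (vmk k c hc (2*k*c + j)) := by
  have e1 : k*(2*c) = 2*k*c := by ring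
  rw [myG_adj, vmk_val k c hc _ (tl_lt' k c t l ht hl), vmk_val k c hc _ (by omega)]
  have := tl_lt k c t l ht hl
  exact ⟨by omega, Or.inr (Or.inl ⟨by omega, by omega⟩)⟩

section Tri

variable (k c : ℕ) (hk : 1 ≤ k) (hc : 1 ≤ c)

def D1 : Finset (ℕ × Finset ℕ) := (Finset.range k) ×ˢ ((Finset.range (2*c)).powersetCard 3)

def f1 (hc : 1 ≤ c) (p : ℕ × Finset ℕ) : Finset (Fin (2*k*c+c)) :=
  p.2.image (fun l => vmk k c hc (p.1*(2*c)+l))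

def D2 : Finset ((ℕ × Finset ℕ) × ℕ) :=
  ((Finset.range k) ×ˢ ((Finset.range (2*c)).powersetCard 2)) ×ˢ (Finset.range c)

def f2 (hc : 1 ≤ c) (p : (ℕ × Finset ℕ) × ℕ) : Finset (Fin (2*k*c+c)) :=
  insert (vmk k c hc (2*k*c + p.2)) (p.1.2.image (fun l => vmk k c hc (p.1.1*(2*c)+l)))

lemma mem_image_iff (hc : 1 ≤ c) {t t' l : ℕ} {s' : Finset ℕ} (ht : t < k) (ht' : t' < k)
    (hl : l < 2*c) (hs' : s' ⊆ Finset.range (2*c)) :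
    vmk k c hc (t*(2*c)+l) ∈ s'.image (fun l' => vmk k c hc (t'*(2*c)+l')) ↔
      (t = t' ∧ l ∈ s') := by
  constructor
  · intro h
    obtain ⟨l', hl', he⟩ := Finset.mem_image.1 h
    have hl'2 : l' < 2*c := Finset.mem_range.1 (hs' hl')
    have hv : t*(2*c)+l = t'*(2*c)+l' := by
      have h2 := congrArg (fun v : Fin (2*k*c+c) => (v:ℕ)) he
      rwa [vmk_val k c hc _ (tl_lt' k c t l ht hl),
        vmk_val k c hc _ (tl_lt' k c t' l' ht' hl'2), eq_comm] at h2
    obtain ⟨h1, h2⟩ := unique_div_mod (by omega : 0 < 2*c) hl hl'2 hv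
    exact ⟨h1, h2 ▸ hl'⟩
  · rintro ⟨rfl, hmem⟩
    exact Finset.mem_image.2 ⟨l, hmem, rfl⟩

end Tri

section Tri2

variable (k c : ℕ)

lemma f1_clique (hc : 1 ≤ c) (p : ℕ × Finset ℕ) (hp : p ∈ D1 k c) :
    (myG k c).IsNClique 3 (f1 k c hc p) := by
  obtain ⟨ht, hs⟩ := Finset.mem_product.1 hp
  rw [Finset.mem_range] at ht
  obtain ⟨hsub, hcard⟩ := Finset.mem_powersetCard.1 hs
  rw [SimpleGraph.isNClique_iff]
  constructor
  · intro a ha b hb hne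
    obtain ⟨la, hla, rfl⟩ := Finset.mem_image.1 (Finset.mem_coe.1 ha)
    obtain ⟨lb, hlb, rfl⟩ := Finset.mem_image.1 (Finset.mem_coe.1 hb)
    have hla2 : la < 2*c := Finset.mem_range.1 (hsub hla)
    have hlb2 : lb < 2*c := Finset.mem_range.1 (hsub hlb)
    exact adj_clique k c hc p.1 la lb ht hla2 hlb2 (fun e => hne (by rw [e]))
  · rw [f1, Finset.card_image_of_injOn, hcard]
    intro l1 h1 l2 h2 he
    have hb1 : l1 < 2*c := Finset.mem_range.1 (hsub h1)
    have hb2 : l2 < 2*c := Finset.mem_range.1 (hsub h2)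
    have := congrArg (fun v : Fin (2*k*c+c) => (v:ℕ)) he
    simp only at this
    rw [vmk_val k c hc _ (tl_lt' k c p.1 l1 ht hb1),
      vmk_val k c hc _ (tl_lt' k c p.1 l2 ht hb2)] at this
    omega

lemma f1_injOn (hc : 1 ≤ c) : Set.InjOn (f1 k c hc) (D1 k c) := by
  rintro ⟨t, s⟩ hp ⟨t', s'⟩ hq h
  obtain ⟨ht, hs⟩ := Finset.mem_product.1 hp
  obtain ⟨ht', hs'⟩ := Finset.mem_product.1 hq
  rw [Finset.mem_range] at ht ht'
  obtain ⟨hsub, hcard⟩ := Finset.mem_powersetCard.1 hs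
  obtain ⟨hsub', hcard'⟩ := Finset.mem_powersetCard.1 hs'
  dsimp only at ht ht' hsub hcard hsub' hcard'
  obtain ⟨l0, hl0⟩ := Finset.card_pos.1 (by omega : 0 < s.card)
  have hl02 : l0 < 2*c := Finset.mem_range.1 (hsub hl0)
  have hmem : vmk k c hc (t*(2*c)+l0) ∈ f1 k c hc (t', s') := by
    rw [← h]
    exact Finset.mem_image.2 ⟨l0, hl0, rfl⟩
  have htt : t = t' := ((mem_image_iff k c hc ht ht' hl02 hsub').1 hmem).1
  subst htt
  have hss : s = s' := by
    ext l
    constructor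
    · intro hl
      have hl2 : l < 2*c := Finset.mem_range.1 (hsub hl)
      have : vmk k c hc (t*(2*c)+l) ∈ f1 k c hc (t, s') := by
        rw [← h]; exact Finset.mem_image.2 ⟨l, hl, rfl⟩
      exact ((mem_image_iff k c hc ht ht hl2 hsub').1 this).2
    · intro hl
      have hl2 : l < 2*c := Finset.mem_range.1 (hsub' hl)
      have : vmk k c hc (t*(2*c)+l) ∈ f1 k c hc (t, s) := by
        rw [h]; exact Finset.mem_image.2 ⟨l, hl, rfl⟩
      exact ((mem_image_iff k c hc ht ht hl2 hsub).1 this).2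
  rw [hss]

lemma apex_not_mem (hc : 1 ≤ c) (t j : ℕ) (ht : t < k) (hj : j < c) (s : Finset ℕ)
    (hsub : s ⊆ Finset.range (2*c)) :
    vmk k c hc (2*k*c + j) ∉ s.image (fun l => vmk k c hc (t*(2*c)+l)) := by
  intro hmem
  obtain ⟨l, hl, he⟩ := Finset.mem_image.1 hmem
  have hl2 : l < 2*c := Finset.mem_range.1 (hsub hl)
  have := congrArg (fun v : Fin (2*k*c+c) => (v:ℕ)) he
  rw [vmk_val k c hc _ (tl_lt' k c t l ht hl2), vmk_val k c hc _ (by omega)] at this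
  have h2 := tl_lt k c t l ht hl2
  have e1 : k*(2*c) = 2*k*c := by ring
  omega

lemma f2_clique (hc : 1 ≤ c) (p : (ℕ × Finset ℕ) × ℕ) (hp : p ∈ D2 k c) :
    (myG k c).IsNClique 3 (f2 k c hc p) := by
  obtain ⟨hp1, hj⟩ := Finset.mem_product.1 hp
  obtain ⟨ht, hs⟩ := Finset.mem_product.1 hp1
  rw [Finset.mem_range] at ht hj
  obtain ⟨hsub, hcard⟩ := Finset.mem_powersetCard.1 hs
  rw [SimpleGraph.isNClique_iff]
  constructor
  · intro a ha b hb hne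
    rw [Finset.mem_coe, f2, Finset.mem_insert] at ha hb
    rcases ha with ha | ha <;> rcases hb with hb | hb
    · exact absurd (ha.trans hb.symm) hne
    · obtain ⟨lb, hlb, rfl⟩ := Finset.mem_image.1 hb
      have hlb2 : lb < 2*c := Finset.mem_range.1 (hsub hlb)
      subst ha
      exact (adj_apex k c hc p.1.1 lb p.2 ht hlb2 hj).symm
    · obtain ⟨la, hla, rfl⟩ := Finset.mem_image.1 ha
      have hla2 : la < 2*c := Finset.mem_range.1 (hsub hla)
      subst hb
      exact adj_apex k c hc p.1.1 la p.2 ht hla2 hj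
    · obtain ⟨la, hla, rfl⟩ := Finset.mem_image.1 ha
      obtain ⟨lb, hlb, rfl⟩ := Finset.mem_image.1 hb
      have hla2 : la < 2*c := Finset.mem_range.1 (hsub hla)
      have hlb2 : lb < 2*c := Finset.mem_range.1 (hsub hlb)
      exact adj_clique k c hc p.1.1 la lb ht hla2 hlb2 (fun e => hne (by rw [e]))
  · rw [f2, Finset.card_insert_of_notMem (apex_not_mem k c hc p.1.1 p.2 ht hj p.1.2 hsub),
      Finset.card_image_of_injOn, hcard]
    intro l1 h1 l2 h2 he
    have hb1 : l1 < 2*c := Finset.mem_range.1 (hsub h1)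
    have hb2 : l2 < 2*c := Finset.mem_range.1 (hsub h2)
    have := congrArg (fun v : Fin (2*k*c+c) => (v:ℕ)) he
    simp only at this
    rw [vmk_val k c hc _ (tl_lt' k c p.1.1 l1 ht hb1),
      vmk_val k c hc _ (tl_lt' k c p.1.1 l2 ht hb2)] at this
    omega

lemma f2_injOn (hc : 1 ≤ c) : Set.InjOn (f2 k c hc) (D2 k c) := by
  rintro ⟨⟨t, s⟩, j⟩ hp ⟨⟨t', s'⟩, j'⟩ hq h
  obtain ⟨hp1, hj⟩ := Finset.mem_product.1 hp
  obtain ⟨ht, hs⟩ := Finset.mem_product.1 hp1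
  obtain ⟨hq1, hj'⟩ := Finset.mem_product.1 hq
  obtain ⟨ht', hs'⟩ := Finset.mem_product.1 hq1
  rw [Finset.mem_range] at ht hj ht' hj'
  obtain ⟨hsub, hcard⟩ := Finset.mem_powersetCard.1 hs
  obtain ⟨hsub', hcard'⟩ := Finset.mem_powersetCard.1 hs'
  dsimp only at ht hj ht' hj' hsub hcard hsub' hcard'
  -- the apexes agree
  have hax0 : vmk k c hc (2*k*c + j) ∈ f2 k c hc ((t', s'), j') := by
    rw [← h]; exact Finset.mem_insert_self _ _
  have hax : vmk k c hc (2*k*c + j) ∈ insert (vmk k c hc (2*k*c + j'))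
      (s'.image (fun l => vmk k c hc (t'*(2*c)+l))) := hax0
  rw [Finset.mem_insert] at hax
  have hjj : j = j' := by
    rcases hax with hax | hax
    · have := congrArg (fun v : Fin (2*k*c+c) => (v:ℕ)) hax
      rw [vmk_val k c hc _ (by omega), vmk_val k c hc _ (by omega)] at this
      omega
    · exact absurd hax (apex_not_mem k c hc t' j ht' hj s' hsub')
  subst hjj
  -- the clique parts agree
  have himg : ∀ (u u' : ℕ) (w w' : Finset ℕ), u < k → u' < k → w ⊆ Finset.range (2*c) →
      w' ⊆ Finset.range (2*c) →
      insert (vmk k c hc (2*k*c + j)) (w.image (fun l => vmk k c hc (u*(2*c)+l))) =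
      insert (vmk k c hc (2*k*c + j)) (w'.image (fun l => vmk k c hc (u'*(2*c)+l))) →
      ∀ x ∈ w.image (fun l => vmk k c hc (u*(2*c)+l)),
        x ∈ w'.image (fun l => vmk k c hc (u'*(2*c)+l)) := by
    intro u u' w w' hu hu' hw hw' he x hx
    have : x ∈ insert (vmk k c hc (2*k*c + j)) (w'.image (fun l => vmk k c hc (u'*(2*c)+l))) := by
      rw [← he]; exact Finset.mem_insert_of_mem hx
    rcases Finset.mem_insert.1 this with hx2 | hx2
    · exfalso
      rw [hx2] at hx
      exact apex_not_mem k c hc u j hu hj w hw hx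
    · exact hx2
  have h' : ∀ x, x ∈ s.image (fun l => vmk k c hc (t*(2*c)+l)) ↔
      x ∈ s'.image (fun l => vmk k c hc (t'*(2*c)+l)) := by
    intro x
    constructor
    · exact himg t t' s s' ht ht' hsub hsub' h x
    · exact himg t' t s' s ht' ht hsub' hsub h.symm x
  obtain ⟨l0, hl0⟩ := Finset.card_pos.1 (by omega : 0 < s.card)
  have hl02 : l0 < 2*c := Finset.mem_range.1 (hsub hl0)
  have htt : t = t' :=
    ((mem_image_iff k c hc ht ht' hl02 hsub').1
      ((h' _).1 (Finset.mem_image.2 ⟨l0, hl0, rfl⟩))).1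
  subst htt
  have hss : s = s' := by
    ext l
    constructor
    · intro hl
      have hl2 : l < 2*c := Finset.mem_range.1 (hsub hl)
      exact ((mem_image_iff k c hc ht ht hl2 hsub').1
        ((h' _).1 (Finset.mem_image.2 ⟨l, hl, rfl⟩))).2
    · intro hl
      have hl2 : l < 2*c := Finset.mem_range.1 (hsub' hl)
      exact ((mem_image_iff k c hc ht ht hl2 hsub).1
        ((h' _).2 (Finset.mem_image.2 ⟨l, hl, rfl⟩))).2
  rw [hss]

lemma tri_count (hk : 1 ≤ k) (hc : 1 ≤ c) :
    k * ((2*c).choose 3) + k * ((2*c).choose 2) * c ≤ ((myG k c).cliqueFinset 3).card := by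
  have hd1 : ((D1 k c).image (f1 k c hc)).card = k * ((2*c).choose 3) := by
    rw [Finset.card_image_of_injOn (f1_injOn k c hc), D1, Finset.card_product,
      Finset.card_range, Finset.card_powersetCard, Finset.card_range]
  have hd2 : ((D2 k c).image (f2 k c hc)).card = k * ((2*c).choose 2) * c := by
    rw [Finset.card_image_of_injOn (f2_injOn k c hc), D2, Finset.card_product,
      Finset.card_product, Finset.card_range, Finset.card_powersetCard, Finset.card_range,
      Finset.card_range]
  have hdis : Disjoint ((D1 k c).image (f1 k c hc)) ((D2 k c).image (f2 k c hc)) := by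
    rw [Finset.disjoint_left]
    rintro S hS1 hS2
    obtain ⟨p, hp, rfl⟩ := Finset.mem_image.1 hS1
    obtain ⟨q, hq, hSq⟩ := Finset.mem_image.1 hS2
    obtain ⟨hq1, hj⟩ := Finset.mem_product.1 hq
    obtain ⟨ht', hs'⟩ := Finset.mem_product.1 hq1
    rw [Finset.mem_range] at ht' hj
    obtain ⟨ht, hs⟩ := Finset.mem_product.1 hp
    rw [Finset.mem_range] at ht
    obtain ⟨hsub, hcard⟩ := Finset.mem_powersetCard.1 hs
    have hmem0 : vmk k c hc (2*k*c + q.2) ∈ f2 k c hc q := Finset.mem_insert_self _ _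
    have hmem : vmk k c hc (2*k*c + q.2) ∈ f1 k c hc p := by rw [← hSq]; exact hmem0
    exact apex_not_mem k c hc p.1 q.2 ht hj p.2 hsub hmem
  have hsub : ((D1 k c).image (f1 k c hc)) ∪ ((D2 k c).image (f2 k c hc)) ⊆
      (myG k c).cliqueFinset 3 := by
    intro S hS
    rcases Finset.mem_union.1 hS with hS | hS
    · obtain ⟨p, hp, rfl⟩ := Finset.mem_image.1 hS
      exact SimpleGraph.mem_cliqueFinset_iff.2 (f1_clique k c hc p hp)
    · obtain ⟨p, hp, rfl⟩ := Finset.mem_image.1 hS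
      exact SimpleGraph.mem_cliqueFinset_iff.2 (f2_clique k c hc p hp)
  calc k * ((2*c).choose 3) + k * ((2*c).choose 2) * c
      = (((D1 k c).image (f1 k c hc)) ∪ ((D2 k c).image (f2 k c hc))).card := by
        rw [Finset.card_union_of_disjoint hdis, hd1, hd2]
    _ ≤ ((myG k c).cliqueFinset 3).card := Finset.card_le_card hsub

end Tri2

/-- For every `k ≥ 1` and even `b ≥ 2`, there is a simple graph on `(2k+1)·b/2` vertices
with exactly `k·C(b,2) + k·b²/2` edges whose edge set partitions into at most `b` forests
and which has at least `k·C(b,3) + k·C(b,2)·(b/2)` triangles. -/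
theorem exists_graph_arboricity_many_triangles (k b : ℕ) (hk : 1 ≤ k) (hb : 2 ≤ b)
    (hbe : 2 ∣ b) :
    ∃ G : SimpleGraph (Fin ((2 * k + 1) * b / 2)),
      G.edgeSet.ncard = k * b.choose 2 + k * (b ^ 2 / 2) ∧
      (∃ F : Fin b → Set (Sym2 (Fin ((2 * k + 1) * b / 2))),
        Pairwise (Function.onFun Disjoint F) ∧
        ⋃ i, F i = G.edgeSet ∧
        ∀ i, (SimpleGraph.fromEdgeSet (F i)).IsAcyclic) ∧
      k * b.choose 3 + k * b.choose 2 * (b / 2) ≤ (G.cliqueSet 3).ncard := by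
  obtain ⟨c, rfl⟩ := hbe
  have hc : 1 ≤ c := by omega
  have hn : (2 * k + 1) * (2 * c) / 2 = 2*k*c + c := by
    rw [show (2*k+1)*(2*c) = (2*k*c+c)*2 by ring, Nat.mul_div_cancel _ two_pos]
  rw [hn]
  refine ⟨myG k c, ?_, ⟨fun i => Fam k c (i:ℕ), fam_disjoint k c, fam_union k c hc, ?_⟩, ?_⟩
  · rw [← SimpleGraph.coe_edgeFinset, Set.ncard_coe_finset]
    exact edge_count k c hk hc
  · intro i
    by_cases hi : (i:ℕ) < c
    · exact fam_path_acyclic k c hc _ hi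
    · exact fam_star_acyclic k c hc _ (by omega) i.isLt
  · rw [← SimpleGraph.coe_cliqueFinset, Set.ncard_coe_finset,
      show 2*c/2 = c by omega]
    exact tri_count k c hk hc
end

section
/- Let ℓ ≥ 3 be a fixed integer. For every integer k ≥ 1 and every even integer b ≥ ℓ, there exists a finite simple graph G on n = (2k+1)·b/2 vertices with exactly m = k·C(b,2) + k·b²/2 edges such that the edge set of G can be partitioned into at most b subsets each forming an acyclic subgraph (a forest) on the vertex set of G, and the number of complete subgraphs of G on ℓ vertices is at least k·C(b,ℓ) + k·C(b,ℓ−1)·(b/2). -/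
open SimpleGraph Finset

lemma walk_support_getElem {V : Type*} {G : SimpleGraph V} {u v : V} (p : G.Walk u v)
    (i : ℕ) (hi : i < p.support.length) : p.support[i] = p.getVert i := by
  induction p generalizing i with
  | nil =>
    simp only [SimpleGraph.Walk.support_nil, List.length_singleton] at hi
    obtain rfl : i = 0 := by omega
    simp [SimpleGraph.Walk.getVert]
  | cons h q ih =>
    cases i with
    | zero => simp [SimpleGraph.Walk.getVert]
    | succ n =>
      simp only [SimpleGraph.Walk.support_cons, List.getElem_cons_succ,
        SimpleGraph.Walk.getVert_cons_succ]
      exact ih n (by simpa [SimpleGraph.Walk.support_cons] using hi)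

lemma cycle_getVert_inj {V : Type*} {G : SimpleGraph V} {v : V} {c : G.Walk v v}
    (hc : c.IsCycle) {i j : ℕ} (hi : 1 ≤ i) (hi' : i ≤ c.length) (hj : 1 ≤ j)
    (hj' : j ≤ c.length) (h : c.getVert i = c.getVert j) : i = j := by
  have hnd : c.support.tail.Nodup := hc.2
  have hlen : c.support.length = c.length + 1 := SimpleGraph.Walk.length_support c
  have hlt : c.support.tail.length = c.length := by simp [List.length_tail, hlen]
  have h1 : c.support.tail[i-1]'(by omega) = c.getVert i := by
    rw [List.getElem_tail]
    rw [walk_support_getElem c _ (by omega)]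
    congr 1; omega
  have h2 : c.support.tail[j-1]'(by omega) = c.getVert j := by
    rw [List.getElem_tail]
    rw [walk_support_getElem c _ (by omega)]
    congr 1; omega
  have := (List.Nodup.getElem_inj_iff hnd (i := i-1) (hi := by omega) (j := j-1)
    (hj := by omega)).mp (by rw [h1, h2, h])
  omega

lemma acyclic_of_rank {V : Type*} {G : SimpleGraph V} (r : V → ℕ)
    (hne : ∀ ⦃u v⦄, G.Adj u v → r u ≠ r v)
    (huniq : ∀ ⦃x u w⦄, G.Adj x u → G.Adj x w → r u < r x → r w < r x → u = w) :
    G.IsAcyclic := by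
  intro v c hc
  have hL : 3 ≤ c.length := hc.three_le_length
  obtain ⟨j, hjmem, hjmax⟩ := (Finset.Icc 1 c.length).exists_max_image
    (fun i => r (c.getVert i)) ⟨1, by simp; omega⟩
  simp only [Finset.mem_Icc] at hjmem
  obtain ⟨hj1, hjL⟩ := hjmem
  set w := c.getVert j with hw
  set a := c.getVert (j-1) with ha
  set b := if j = c.length then c.getVert 1 else c.getVert (j+1) with hb
  have hadj_a : G.Adj w a := by
    have := c.adj_getVert_succ (i := j - 1) (by omega)
    have hj' : j - 1 + 1 = j := by omega
    rw [hj'] at this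
    exact this.symm
  have hadj_b : G.Adj w b := by
    rw [hb]
    split_ifs with hjeq
    · have h0 : c.getVert 0 = v := c.getVert_zero
      have hLv : c.getVert c.length = v := c.getVert_length
      have := c.adj_getVert_succ (i := 0) (by omega)
      rw [h0] at this
      rw [hw, hjeq, hLv]
      simpa using this
    · exact c.adj_getVert_succ (by omega)
  have hra : r a ≤ r w := by
    rcases Nat.eq_or_lt_of_le hj1 with h1 | h1
    · have : a = c.getVert c.length := by
        rw [ha, ← h1]; simp [c.getVert_zero, c.getVert_length]
      rw [this]
      exact hjmax _ (by simp [Finset.mem_Icc]; omega)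
    · exact hjmax _ (by simp [Finset.mem_Icc]; omega)
  have hrb : r b ≤ r w := by
    rw [hb]; split_ifs with hjeq
    · exact hjmax _ (by simp [Finset.mem_Icc]; omega)
    · exact hjmax _ (by simp [Finset.mem_Icc]; omega)
  have hra' : r a < r w := lt_of_le_of_ne hra (fun h => hne hadj_a h.symm)
  have hrb' : r b < r w := lt_of_le_of_ne hrb (fun h => hne hadj_b h.symm)
  have hab : a = b := huniq hadj_a hadj_b hra' hrb'
  rw [hb] at hab
  by_cases hjeq : j = c.length
  · rw [if_pos hjeq] at hab
    have : j - 1 = 1 := cycle_getVert_inj hc (by omega) (by omega) (by omega) (by omega) hab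
    omega
  · rw [if_neg hjeq] at hab
    rcases Nat.eq_or_lt_of_le hj1 with h1 | h1
    · have haL : a = c.getVert c.length := by
        rw [ha, ← h1]; simp [c.getVert_zero, c.getVert_length]
      rw [haL] at hab
      have : c.length = j + 1 := cycle_getVert_inj hc (by omega) (by omega) (by omega)
        (by omega) hab
      omega
    · have : j - 1 = j + 1 := cycle_getVert_inj hc (by omega) (by omega) (by omega)
        (by omega) hab
      omega

lemma card_filter_fin' {n : ℕ} (q : Fin n → Prop) (p : ℕ → Prop) [DecidablePred q]
    [DecidablePred p] (h : ∀ v : Fin n, q v ↔ p v.val) :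
    (Finset.univ.filter q).card = ((Finset.range n).filter p).card := by
  have : (Finset.univ.filter q).map Fin.valEmbedding = (Finset.range n).filter p := by
    ext x
    simp only [Finset.mem_map, Finset.mem_filter, Finset.mem_univ, true_and, Finset.mem_range,
      Fin.valEmbedding_apply]
    constructor
    · rintro ⟨a, ha, rfl⟩; exact ⟨a.isLt, (h a).mp ha⟩
    · rintro ⟨hx, hp⟩; exact ⟨⟨x, hx⟩, (h ⟨x, hx⟩).mpr hp, rfl⟩
  rw [← this, Finset.card_map]

def zr (c i p : ℕ) : ℕ :=
  if (if i ≤ p then p - i else p + 2*c - i) = 0 then 0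
  else if (if i ≤ p then p - i else p + 2*c - i) ≤ c then
    2*(if i ≤ p then p - i else p + 2*c - i) - 1
  else 2*(2*c - (if i ≤ p then p - i else p + 2*c - i))

lemma zr_inj (c i pu pv : ℕ) (hi : i < c) (hpu : pu < 2*c) (hpv : pv < 2*c)
    (h : zr c i pu = zr c i pv) : pu = pv := by
  unfold zr at h
  split_ifs at h <;> omega

lemma zr_step (c i pu pv : ℕ) (hc : 2 ≤ c) (hi : i < c) (hpu : pu < 2*c) (hpv : pv < 2*c)
    (hne : pu ≠ pv)
    (hs : pu + pv = 2*i ∨ pu + pv = 2*i+1 ∨ pu + pv = 2*c+2*i ∨ pu + pv = 2*c+2*i+1) :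
    zr c i pu = zr c i pv + 1 ∨ zr c i pv = zr c i pu + 1 := by
  unfold zr
  split_ifs <;> omega
/-- For every fixed `ℓ ≥ 3`, every `k ≥ 1` and every even `b ≥ ℓ`, there is a simple graph
on `(2k+1)·b/2` vertices with exactly `k·C(b,2) + k·b²/2` edges whose edge set partitions
into at most `b` forests and which has at least `k·C(b,ℓ) + k·C(b,ℓ-1)·(b/2)` copies
of `K_ℓ`. -/
theorem exists_graph_arboricity_many_cliques (ℓ k b : ℕ) (hl : 3 ≤ ℓ) (hk : 1 ≤ k)
    (hb : ℓ ≤ b) (hbe : 2 ∣ b) :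
    ∃ G : SimpleGraph (Fin ((2 * k + 1) * b / 2)),
      G.edgeSet.ncard = k * b.choose 2 + k * (b ^ 2 / 2) ∧
      (∃ F : Fin b → Set (Sym2 (Fin ((2 * k + 1) * b / 2))),
        Pairwise (Function.onFun Disjoint F) ∧
        ⋃ i, F i = G.edgeSet ∧
        ∀ i, (SimpleGraph.fromEdgeSet (F i)).IsAcyclic) ∧
      k * b.choose ℓ + k * b.choose (ℓ - 1) * (b / 2) ≤ (G.cliqueSet ℓ).ncard := by
  obtain ⟨c, rfl⟩ := hbe
  have hc2 : 2 ≤ c := by omega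
  have hfin : (2 * k + 1) * (2 * c) / 2 = 2 * k * c + c := by
    rw [show (2*k+1)*(2*c) = 2*(2*k*c+c) by ring]
    omega
  rw [hfin]
  rw [show 2 * c / 2 = c from by omega]
  rw [show (2*c)^2 / 2 = 2*c^2 from by rw [show (2*c)^2 = 2*(2*c^2) by ring]; omega]
  rw [show (2*c).choose 2 = c*(2*c-1) from by
    rw [Nat.choose_two_right]
    rw [show (2*c) * (2*c - 1) = 2 * (c * (2*c-1)) from by
      cases c with
      | zero => simp
      | succ d => ring_nf]
    omega]
  set n := 2 * k * c + c with hndef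
  set m := 2 * k * c with hmdef
  set R : Fin n → Fin n → Prop := fun u v =>
    (u.val < m ∧ v.val < m ∧ u.val / (2 * c) = v.val / (2 * c)) ∨ (u.val < m ∧ m ≤ v.val)
    with hR
  haveI : DecidableRel R := fun u v => by unfold R; infer_instance
  set G := SimpleGraph.fromRel R with hG
  haveI : DecidableRel G.Adj := fun u v =>
    decidable_of_iff' _ (SimpleGraph.fromRel_adj R u v)
  have hadj : ∀ u v : Fin n, G.Adj u v ↔ u ≠ v ∧
      ((u.val < m ∧ v.val < m ∧ u.val / (2 * c) = v.val / (2 * c)) ∨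
       (u.val < m ∧ m ≤ v.val) ∨ (v.val < m ∧ m ≤ u.val)) := by
    intro u v
    rw [hG, SimpleGraph.fromRel_adj]
    unfold R
    constructor
    · rintro ⟨h1, h2 | h2⟩
      · exact ⟨h1, by tauto⟩
      · refine ⟨h1, ?_⟩
        rcases h2 with ⟨hv, hu, heq⟩ | h2
        · exact Or.inl ⟨hu, hv, heq.symm⟩
        · tauto
    · rintro ⟨h1, h2⟩
      refine ⟨h1, ?_⟩
      rcases h2 with h | h | h
      · exact Or.inl (Or.inl h)
      · exact Or.inl (Or.inr h)
      · exact Or.inr (Or.inr ⟨h.1, h.2⟩)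
  have hdiviff : ∀ B x : ℕ, x / (2*c) = B ↔ B * (2*c) ≤ x ∧ x < B * (2*c) + 2*c := by
    intro B x
    constructor
    · rintro rfl
      have h1 := Nat.div_add_mod x (2*c)
      have h2 := Nat.mod_lt x (y := 2*c) (by omega)
      have h3 : (x/(2*c))*(2*c) = 2*c*(x/(2*c)) := by ring
      omega
    · rintro ⟨h1, h2⟩
      exact Nat.div_eq_of_lt_le h1 (by rw [show (B+1)*(2*c) = B*(2*c)+2*c by ring]; exact h2)
  -- blocks of vertices with val < m lie in an interval determined by B := val/(2c)
  have hblk : ∀ x : ℕ, x < m → (x/(2*c)) * (2*c) + 2*c ≤ m ∧ (x/(2*c)) * (2*c) ≤ x ∧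
      x < (x/(2*c)) * (2*c) + 2*c := by
    intro x hx
    have h1 := (hdiviff (x/(2*c)) x).mp rfl
    refine ⟨?_, h1⟩
    have hBk : x/(2*c) < k := by
      by_contra hcon
      push_neg at hcon
      have h3 : k * (2*c) ≤ (x/(2*c)) * (2*c) := Nat.mul_le_mul_right _ hcon
      have h4 : k * (2*c) = m := by rw [hmdef]; ring
      omega
    have h5 : ((x/(2*c)) + 1) * (2*c) ≤ k * (2*c) := Nat.mul_le_mul_right _ (by omega)
    have h6 : k * (2*c) = m := by rw [hmdef]; ring
    have h7 : ((x/(2*c)) + 1) * (2*c) = (x/(2*c)) * (2*c) + 2*c := by ring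
    omega
  have hdeg1 : ∀ v : Fin n, v.val < m → G.degree v = (2*c - 1) + c := by
    intro v hv
    obtain ⟨hBm, hv1, hv2⟩ := hblk v.val hv
    rw [SimpleGraph.degree]
    have hnf : G.neighborFinset v = Finset.univ.filter (fun u : Fin n => G.Adj v u) := by
      ext u; simp [SimpleGraph.mem_neighborFinset]
    rw [hnf]
    rw [card_filter_fin' _ (fun x : ℕ =>
        x ≠ v.val ∧ ((v.val/(2*c)) * (2*c) ≤ x ∧ x < (v.val/(2*c)) * (2*c) + 2*c ∨ m ≤ x)) ?_]
    · have : (Finset.range n).filter (fun x : ℕ =>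
          x ≠ v.val ∧ ((v.val/(2*c)) * (2*c) ≤ x ∧ x < (v.val/(2*c)) * (2*c) + 2*c ∨ m ≤ x)) =
          ((Finset.Ico ((v.val/(2*c))*(2*c)) ((v.val/(2*c))*(2*c)+2*c)).erase v.val)
            ∪ Finset.Ico m n := by
        ext x
        simp only [Finset.mem_filter, Finset.mem_range, Finset.mem_union, Finset.mem_erase,
          Finset.mem_Ico]
        omega
      rw [this, Finset.card_union_of_disjoint, Finset.card_erase_of_mem, Nat.card_Ico,
        Nat.card_Ico]
      · omega
      · rw [Finset.mem_Ico]; exact ⟨hv1, hv2⟩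
      · rw [Finset.disjoint_left]
        intro x hx hx2
        rw [Finset.mem_erase, Finset.mem_Ico] at hx
        rw [Finset.mem_Ico] at hx2
        omega
    · intro u
      rw [hadj]
      constructor
      · rintro ⟨hne, h | h | h⟩
        · have := (hdiviff (v.val/(2*c)) u.val).mpr
          have heq : u.val / (2*c) = v.val / (2*c) := h.2.2.symm
          have := (hdiviff (v.val/(2*c)) u.val).mp heq
          exact ⟨fun h' => hne (Fin.val_injective h'.symm), Or.inl this⟩
        · exact ⟨fun h' => hne (Fin.val_injective h'.symm), Or.inr h.2⟩
        · omega
      · rintro ⟨hne, h | h⟩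
        · refine ⟨fun h' => hne (congrArg Fin.val h').symm, Or.inl ⟨hv, by omega, ?_⟩⟩
          exact ((hdiviff (v.val/(2*c)) u.val).mpr h).symm
        · exact ⟨fun h' => hne (congrArg Fin.val h').symm, Or.inr (Or.inl ⟨hv, h⟩)⟩
  have hdeg2 : ∀ v : Fin n, m ≤ v.val → G.degree v = m := by
    intro v hv
    rw [SimpleGraph.degree]
    have hnf : G.neighborFinset v = Finset.univ.filter (fun u : Fin n => G.Adj v u) := by
      ext u; simp [SimpleGraph.mem_neighborFinset]
    rw [hnf]
    rw [card_filter_fin' _ (fun x : ℕ => x < m) ?_]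
    · have : (Finset.range n).filter (fun x : ℕ => x < m) = Finset.range m := by
        ext x
        simp only [Finset.mem_filter, Finset.mem_range]
        omega
      rw [this, Finset.card_range]
    · intro u
      rw [hadj]
      constructor
      · rintro ⟨hne, h | h | h⟩ <;> omega
      · intro h
        refine ⟨fun h' => ?_, Or.inr (Or.inr ⟨h, hv⟩)⟩
        · have := congrArg Fin.val h'
          omega
  have hedge : G.edgeFinset.card = k * (c*(2*c-1)) + k * (2*c^2) := by
    have hsum := SimpleGraph.sum_degrees_eq_twice_card_edges G
    have hsplit : ∑ v : Fin n, G.degree v =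
        ∑ v ∈ Finset.univ.filter (fun v : Fin n => v.val < m), G.degree v +
        ∑ v ∈ Finset.univ.filter (fun v : Fin n => ¬ v.val < m), G.degree v :=
      (Finset.sum_filter_add_sum_filter_not _ _ _).symm
    have hcard1 : (Finset.univ.filter (fun v : Fin n => v.val < m)).card = m := by
      rw [card_filter_fin' _ (fun x : ℕ => x < m) (fun v => Iff.rfl)]
      have : (Finset.range n).filter (fun x : ℕ => x < m) = Finset.range m := by
        ext x; simp only [Finset.mem_filter, Finset.mem_range]; omega
      rw [this, Finset.card_range]
    have hcard2 : (Finset.univ.filter (fun v : Fin n => ¬ v.val < m)).card = c := by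
      rw [card_filter_fin' _ (fun x : ℕ => ¬ x < m) (fun v => Iff.rfl)]
      have : (Finset.range n).filter (fun x : ℕ => ¬ x < m) = Finset.Ico m n := by
        ext x; simp only [Finset.mem_filter, Finset.mem_range, Finset.mem_Ico]; omega
      rw [this, Nat.card_Ico]
      omega
    have h1 : ∑ v ∈ Finset.univ.filter (fun v : Fin n => v.val < m), G.degree v
        = m * ((2*c-1) + c) := by
      rw [Finset.sum_congr rfl (fun v hv => hdeg1 v (Finset.mem_filter.mp hv).2),
        Finset.sum_const, smul_eq_mul, hcard1]
    have h2 : ∑ v ∈ Finset.univ.filter (fun v : Fin n => ¬ v.val < m), G.degree v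
        = c * m := by
      rw [Finset.sum_congr rfl (fun v hv => hdeg2 v (by
          have := (Finset.mem_filter.mp hv).2; omega)),
        Finset.sum_const, smul_eq_mul, hcard2]
    rw [hsplit, h1, h2] at hsum
    have hexp : m * ((2*c-1) + c) + c * m = 2 * (k * (c*(2*c-1)) + k * (2*c^2)) := by
      rw [hmdef]
      cases Nat.exists_eq_add_of_le (show 1 ≤ c by omega) with
      | intro d hd =>
        subst hd
        ring_nf
    rw [hexp] at hsum
    omega
  have goalA : G.edgeSet.ncard = k * (c*(2*c-1)) + k * (2*c^2) := by
    rw [← SimpleGraph.coe_edgeFinset, Set.ncard_coe_finset, hedge]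
  -- position of a vertex within its block
  set pos : Fin n → ℕ := fun v => v.val - (v.val/(2*c))*(2*c) with hposdef
  set F : Fin (2*c) → Set (Sym2 (Fin n)) := fun i =>
    {e | ∃ u v : Fin n, e = s(u,v) ∧
      (if i.val < c then
        (u.val < m ∧ v.val < m ∧ u.val/(2*c) = v.val/(2*c) ∧ u ≠ v ∧
          (pos u + pos v = 2*i.val ∨ pos u + pos v = 2*i.val+1 ∨
           pos u + pos v = 2*c+2*i.val ∨ pos u + pos v = 2*c+2*i.val+1))
       else (u.val < m ∧ v.val = m + (i.val - c)))} with hFdef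
  have hmemC : ∀ (i : Fin (2*c)), i.val < c → ∀ x y : Fin n, (s(x,y) ∈ F i ↔
      (x.val < m ∧ y.val < m ∧ x.val/(2*c) = y.val/(2*c) ∧ x ≠ y ∧
        (pos x + pos y = 2*i.val ∨ pos x + pos y = 2*i.val+1 ∨
         pos x + pos y = 2*c+2*i.val ∨ pos x + pos y = 2*c+2*i.val+1))) := by
    intro i hi x y
    constructor
    · rintro ⟨u, v, he, hcond⟩
      rw [if_pos hi] at hcond
      obtain ⟨hu, hv, hdiv, hne, hsum⟩ := hcond
      rcases Sym2.eq_iff.mp he with ⟨h1, h2⟩ | ⟨h1, h2⟩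
      · subst h1; subst h2; exact ⟨hu, hv, hdiv, hne, hsum⟩
      · subst h1; subst h2; exact ⟨hv, hu, hdiv.symm, hne.symm, by omega⟩
    · rintro ⟨hu, hv, hdiv, hne, hsum⟩
      exact ⟨x, y, rfl, by rw [if_pos hi]; exact ⟨hu, hv, hdiv, hne, hsum⟩⟩
  have hmemS : ∀ (i : Fin (2*c)), ¬ i.val < c → ∀ x y : Fin n, (s(x,y) ∈ F i ↔
      ((x.val < m ∧ y.val = m + (i.val - c)) ∨ (y.val < m ∧ x.val = m + (i.val - c)))) := by
    intro i hi x y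
    constructor
    · rintro ⟨u, v, he, hcond⟩
      rw [if_neg hi] at hcond
      rcases Sym2.eq_iff.mp he with ⟨h1, h2⟩ | ⟨h1, h2⟩
      · subst h1; subst h2; exact Or.inl hcond
      · subst h1; subst h2; exact Or.inr hcond
    · rintro (⟨h1, h2⟩ | ⟨h1, h2⟩)
      · exact ⟨x, y, rfl, by rw [if_neg hi]; exact ⟨h1, h2⟩⟩
      · exact ⟨y, x, Sym2.eq_swap, by rw [if_neg hi]; exact ⟨h1, h2⟩⟩
  have hpos : ∀ v : Fin n, pos v = v.val - (v.val/(2*c))*(2*c) := fun v => rfl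
  have hposlt : ∀ v : Fin n, v.val < m → pos v < 2*c := by
    intro v hv
    obtain ⟨h1, h2, h3⟩ := hblk v.val hv
    rw [hpos]
    omega
  have goalB : Pairwise (Function.onFun Disjoint F) ∧
      (⋃ i, F i = G.edgeSet) ∧ ∀ i, (SimpleGraph.fromEdgeSet (F i)).IsAcyclic := by
    refine ⟨?_, ?_, ?_⟩
    · -- pairwise disjoint
      intro i j hij
      have hvalne : i.val ≠ j.val := fun h => hij (Fin.val_injective h)
      rw [Function.onFun, Set.disjoint_left]
      rintro e ⟨u, v, rfl, hcond⟩ hej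
      have hei : s(u,v) ∈ F i := ⟨u, v, rfl, hcond⟩
      by_cases hic : i.val < c <;> by_cases hjc : j.val < c
      · obtain ⟨_, _, _, _, hsi⟩ := (hmemC i hic u v).mp hei
        obtain ⟨_, _, _, _, hsj⟩ := (hmemC j hjc u v).mp hej
        omega
      · obtain ⟨hu, hv, _, _, _⟩ := (hmemC i hic u v).mp hei
        rcases (hmemS j hjc u v).mp hej with ⟨_, h2⟩ | ⟨_, h2⟩ <;> omega
      · obtain ⟨hu, hv, _, _, _⟩ := (hmemC j hjc u v).mp hej
        rcases (hmemS i hic u v).mp hei with ⟨_, h2⟩ | ⟨_, h2⟩ <;> omega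
      · rcases (hmemS i hic u v).mp hei with ⟨h1, h2⟩ | ⟨h1, h2⟩ <;>
          rcases (hmemS j hjc u v).mp hej with ⟨h3, h4⟩ | ⟨h3, h4⟩ <;> omega
    · -- union is the edge set
      ext e
      induction e with
      | _ x y =>
        rw [Set.mem_iUnion, SimpleGraph.mem_edgeSet, hadj]
        constructor
        · rintro ⟨i, hi⟩
          by_cases hic : i.val < c
          · obtain ⟨hx, hy, hdiv, hne, _⟩ := (hmemC i hic x y).mp hi
            exact ⟨hne, Or.inl ⟨hx, hy, hdiv⟩⟩
          · rcases (hmemS i hic x y).mp hi with ⟨h1, h2⟩ | ⟨h1, h2⟩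
            · refine ⟨fun h => ?_, Or.inr (Or.inl ⟨h1, by omega⟩)⟩
              · have := congrArg Fin.val h; omega
            · refine ⟨fun h => ?_, Or.inr (Or.inr ⟨h1, by omega⟩)⟩
              · have := congrArg Fin.val h; omega
        · rintro ⟨hne, ⟨hx, hy, hdiv⟩ | ⟨hx, hy⟩ | ⟨hx, hy⟩⟩
          · have hpx := hposlt x hx
            have hpy := hposlt y hy
            by_cases hs : pos x + pos y < 2*c
            · refine ⟨⟨(pos x + pos y)/2, by omega⟩, (hmemC _ (by simp; omega) x y).mpr
                ⟨hx, hy, hdiv, hne, ?_⟩⟩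
              simp only
              omega
            · refine ⟨⟨(pos x + pos y - 2*c)/2, by omega⟩, (hmemC _ (by simp; omega) x y).mpr
                ⟨hx, hy, hdiv, hne, ?_⟩⟩
              simp only
              omega
          · refine ⟨⟨c + (y.val - m), by omega⟩, (hmemS _ (by simp) x y).mpr
              (Or.inl ⟨hx, by simp; omega⟩)⟩
          · refine ⟨⟨c + (x.val - m), by omega⟩, (hmemS _ (by simp) x y).mpr
              (Or.inr ⟨hx, by simp; omega⟩)⟩
    · -- each class is acyclic
      intro i
      by_cases hic : i.val < c
      · apply acyclic_of_rank (fun v : Fin n =>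
          if v.val < m then (v.val/(2*c))*(2*c) + zr c i.val (pos v) else 0)
        · intro u v h
          rw [SimpleGraph.fromEdgeSet_adj] at h
          obtain ⟨hu, hv, hdiv, hne, hsum⟩ := (hmemC i hic u v).mp h.1
          obtain ⟨hbu1, hbu2, hbu3⟩ := hblk u.val hu
          obtain ⟨hbv1, hbv2, hbv3⟩ := hblk v.val hv
          have hpne : pos u ≠ pos v := by
            intro hp
            apply hne
            apply Fin.val_injective
            rw [hpos, hpos] at hp
            have hdd : (u.val/(2*c))*(2*c) = (v.val/(2*c))*(2*c) := by rw [hdiv]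
            omega
          have hstep := zr_step c i.val (pos u) (pos v) hc2 hic (hposlt u hu) (hposlt v hv)
            hpne hsum
          simp only [if_pos hu, if_pos hv, hdiv]
          omega
        · intro x u w h1 h2 hl1 hl2
          rw [SimpleGraph.fromEdgeSet_adj] at h1 h2
          obtain ⟨hx, hu, hdiv1, hne1, hsum1⟩ := (hmemC i hic x u).mp h1.1
          obtain ⟨_, hw, hdiv2, hne2, hsum2⟩ := (hmemC i hic x w).mp h2.1
          simp only [if_pos hx, if_pos hu, if_pos hw, ← hdiv1, ← hdiv2] at hl1 hl2
          have hzu : zr c i.val (pos u) < zr c i.val (pos x) := by omega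
          have hzw : zr c i.val (pos w) < zr c i.val (pos x) := by omega
          have hpneu : pos x ≠ pos u := by
            intro hp
            apply hne1
            apply Fin.val_injective
            obtain ⟨hbu1, hbu2, hbu3⟩ := hblk u.val hu
            obtain ⟨hbx1, hbx2, hbx3⟩ := hblk x.val hx
            rw [hpos, hpos] at hp
            have hdd : (x.val/(2*c))*(2*c) = (u.val/(2*c))*(2*c) := by rw [hdiv1]
            omega
          have hpnew : pos x ≠ pos w := by
            intro hp
            apply hne2
            apply Fin.val_injective
            obtain ⟨hbw1, hbw2, hbw3⟩ := hblk w.val hw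
            obtain ⟨hbx1, hbx2, hbx3⟩ := hblk x.val hx
            rw [hpos, hpos] at hp
            have hdd : (x.val/(2*c))*(2*c) = (w.val/(2*c))*(2*c) := by rw [hdiv2]
            omega
          have hstep1 := zr_step c i.val (pos x) (pos u) hc2 hic (hposlt x hx) (hposlt u hu)
            hpneu hsum1
          have hstep2 := zr_step c i.val (pos x) (pos w) hc2 hic (hposlt x hx) (hposlt w hw)
            hpnew hsum2
          have heqz : zr c i.val (pos u) = zr c i.val (pos w) := by omega
          have hpeq := zr_inj c i.val (pos u) (pos w) hic (hposlt u hu) (hposlt w hw) heqz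
          apply Fin.val_injective
          obtain ⟨hbu1, hbu2, hbu3⟩ := hblk u.val hu
          obtain ⟨hbw1, hbw2, hbw3⟩ := hblk w.val hw
          rw [hpos, hpos] at hpeq
          rw [hdiv1] at hdiv2
          have hdd : (u.val/(2*c))*(2*c) = (w.val/(2*c))*(2*c) := by rw [hdiv2]
          omega
      · apply acyclic_of_rank (fun v : Fin n =>
          if v.val = m + (i.val - c) then 0 else v.val + 1)
        · intro u v h
          rw [SimpleGraph.fromEdgeSet_adj] at h
          rcases (hmemS i hic u v).mp h.1 with ⟨h1, h2⟩ | ⟨h1, h2⟩ <;>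
            split_ifs <;> omega
        · intro x u w h1 h2 hl1 hl2
          rw [SimpleGraph.fromEdgeSet_adj] at h1 h2
          by_cases hx : x.val = m + (i.val - c)
          · simp only [if_pos hx] at hl1
            omega
          · have hu : u.val = m + (i.val - c) := by
              rcases (hmemS i hic x u).mp h1.1 with ⟨ha, hb⟩ | ⟨ha, hb⟩ <;> omega
            have hw : w.val = m + (i.val - c) := by
              rcases (hmemS i hic x w).mp h2.1 with ⟨ha, hb⟩ | ⟨ha, hb⟩ <;> omega
            exact Fin.val_injective (hu.trans hw.symm)
  -- Part C : clique counting
  set Bf : Fin k → Finset (Fin n) := fun j =>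
    Finset.univ.filter (fun v : Fin n => j.val*(2*c) ≤ v.val ∧ v.val < j.val*(2*c) + 2*c)
    with hBf
  have hBfacts : ∀ (j : Fin k) (v : Fin n), v ∈ Bf j →
      v.val < m ∧ v.val/(2*c) = j.val := by
    intro j v hv
    rw [hBf] at hv
    simp only [Finset.mem_filter, Finset.mem_univ, true_and] at hv
    have h1 : (j.val+1)*(2*c) ≤ k*(2*c) := Nat.mul_le_mul_right _ (by have := j.isLt; omega)
    have h2 : k*(2*c) = m := by rw [hmdef]; ring
    have h3 : (j.val+1)*(2*c) = j.val*(2*c)+2*c := by ring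
    exact ⟨by omega, (hdiviff j.val v.val).mpr hv⟩
  have hBcard : ∀ j : Fin k, (Bf j).card = 2*c := by
    intro j
    have h1 : (j.val+1)*(2*c) ≤ k*(2*c) := Nat.mul_le_mul_right _ (by have := j.isLt; omega)
    have h2 : k*(2*c) = m := by rw [hmdef]; ring
    have h3 : (j.val+1)*(2*c) = j.val*(2*c)+2*c := by ring
    rw [hBf]
    rw [card_filter_fin' _ (fun x : ℕ => j.val*(2*c) ≤ x ∧ x < j.val*(2*c) + 2*c)
      (fun v => Iff.rfl)]
    have : (Finset.range n).filter (fun x : ℕ => j.val*(2*c) ≤ x ∧ x < j.val*(2*c) + 2*c)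
        = Finset.Ico (j.val*(2*c)) (j.val*(2*c) + 2*c) := by
      ext x
      simp only [Finset.mem_filter, Finset.mem_range, Finset.mem_Ico]
      omega
    rw [this, Nat.card_Ico]
    omega
  set sv : Fin c → Fin n := fun j => ⟨m + j.val, by have := j.isLt; omega⟩ with hsv
  have hA1clique : ∀ (j : Fin k) (s : Finset (Fin n)), s ∈ (Bf j).powersetCard ℓ →
      G.IsNClique ℓ s := by
    intro j s hs
    rw [Finset.mem_powersetCard] at hs
    refine ⟨?_, hs.2⟩
    intro a ha b hb hab
    obtain ⟨ha1, ha2⟩ := hBfacts j a (hs.1 ha)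
    obtain ⟨hb1, hb2⟩ := hBfacts j b (hs.1 hb)
    rw [hadj]
    exact ⟨hab, Or.inl ⟨ha1, hb1, by rw [ha2, hb2]⟩⟩
  have hA2clique : ∀ (j : Fin k) (jc : Fin c) (t : Finset (Fin n)),
      t ∈ (Bf j).powersetCard (ℓ-1) → G.IsNClique ℓ (insert (sv jc) t) := by
    intro j jc t ht
    rw [Finset.mem_powersetCard] at ht
    have hsvnot : sv jc ∉ t := by
      intro hmem
      have := (hBfacts j _ (ht.1 hmem)).1
      rw [hsv] at this
      simp only at this
      omega
    constructor
    · intro a ha b hb hab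
      simp only [Finset.coe_insert, Set.mem_insert_iff, Finset.mem_coe] at ha hb
      rw [hadj]
      rcases ha with rfl | ha <;> rcases hb with rfl | hb
      · exact absurd rfl hab
      · obtain ⟨hb1, _⟩ := hBfacts j b (ht.1 hb)
        refine ⟨hab, Or.inr (Or.inr ⟨hb1, ?_⟩)⟩
        rw [hsv]; simp
      · obtain ⟨ha1, _⟩ := hBfacts j a (ht.1 ha)
        refine ⟨hab, Or.inr (Or.inl ⟨ha1, ?_⟩)⟩
        rw [hsv]; simp
      · obtain ⟨ha1, ha2⟩ := hBfacts j a (ht.1 ha)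
        obtain ⟨hb1, hb2⟩ := hBfacts j b (ht.1 hb)
        exact ⟨hab, Or.inl ⟨ha1, hb1, by rw [ha2, hb2]⟩⟩
    · rw [Finset.card_insert_of_notMem hsvnot, ht.2]
      omega
  set A1 : Finset (Finset (Fin n)) :=
    Finset.univ.biUnion (fun j : Fin k => (Bf j).powersetCard ℓ) with hA1
  set A2 : Finset (Finset (Fin n)) :=
    Finset.univ.biUnion (fun p : Fin k × Fin c =>
      ((Bf p.1).powersetCard (ℓ-1)).image (fun t => insert (sv p.2) t)) with hA2
  have hA1card : A1.card = k * (2*c).choose ℓ := by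
    rw [hA1, Finset.card_biUnion]
    · rw [Finset.sum_congr rfl (fun j _ => by rw [Finset.card_powersetCard, hBcard j])]
      simp [Finset.card_univ, mul_comm]
    · intro x _ y _ hxy
      rw [Function.onFun, Finset.disjoint_left]
      intro s hsx hsy
      rw [Finset.mem_powersetCard] at hsx hsy
      have hne : s.Nonempty := by
        rw [← Finset.card_pos, hsx.2]; omega
      obtain ⟨a, ha⟩ := hne
      have h1 := (hBfacts x a (hsx.1 ha)).2
      have h2 := (hBfacts y a (hsy.1 ha)).2
      exact hxy (Fin.val_injective (by omega))
  have himg : ∀ p : Fin k × Fin c,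
      (((Bf p.1).powersetCard (ℓ-1)).image (fun t => insert (sv p.2) t)).card
        = (2*c).choose (ℓ-1) := by
    intro p
    have hinj : Set.InjOn (fun t => insert (sv p.2) t) (↑((Bf p.1).powersetCard (ℓ-1)) : Set (Finset (Fin n))) := by
      intro t ht t' ht' heq
      rw [Finset.mem_coe, Finset.mem_powersetCard] at ht ht'
      have h1 : sv p.2 ∉ t := by
        intro hmem
        have := (hBfacts p.1 _ (ht.1 hmem)).1
        rw [hsv] at this; simp only at this; omega
      have h2 : sv p.2 ∉ t' := by
        intro hmem
        have := (hBfacts p.1 _ (ht'.1 hmem)).1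
        rw [hsv] at this; simp only at this; omega
      have heq' : insert (sv p.2) t = insert (sv p.2) t' := heq
      rw [← Finset.erase_insert h1, ← Finset.erase_insert h2, heq']
    rw [Finset.card_image_of_injOn hinj, Finset.card_powersetCard, hBcard p.1]
  have hA2card : A2.card = (k * c) * (2*c).choose (ℓ-1) := by
    rw [hA2, Finset.card_biUnion]
    · rw [Finset.sum_congr rfl (fun p _ => himg p)]
      simp [Finset.card_univ, Fintype.card_prod, mul_comm]
    · intro p _ q _ hpq
      rw [Function.onFun, Finset.disjoint_left]
      intro s hsp hsq
      rw [Finset.mem_image] at hsp hsq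
      obtain ⟨t, ht, hts⟩ := hsp
      obtain ⟨t', ht', hts'⟩ := hsq
      rw [Finset.mem_powersetCard] at ht ht'
      -- second coordinates agree
      have hmem1 : sv p.2 ∈ s := by rw [← hts]; exact Finset.mem_insert_self _ _
      have h22 : p.2 = q.2 := by
        rw [← hts'] at hmem1
        rcases Finset.mem_insert.mp hmem1 with h | h
        · exact Fin.val_injective (by
            have := congrArg Fin.val h
            rw [hsv] at this; simp only at this; omega)
        · exfalso
          have := (hBfacts q.1 _ (ht'.1 h)).1
          rw [hsv] at this; simp only at this; omega
      have h11 : p.1 = q.1 := by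
        have hne : t.Nonempty := by
          rw [← Finset.card_pos, ht.2]; omega
        obtain ⟨a, ha⟩ := hne
        have hval := hBfacts p.1 a (ht.1 ha)
        have hasv : a ≠ sv q.2 := by
          intro h
          have := congrArg Fin.val h
          rw [hsv] at this; simp only at this; omega
        have hamem : a ∈ s := by rw [← hts]; exact Finset.mem_insert_of_mem ha
        rw [← hts'] at hamem
        rcases Finset.mem_insert.mp hamem with h | h
        · exact absurd h hasv
        · have hval2 := hBfacts q.1 a (ht'.1 h)
          exact Fin.val_injective (by omega)
      exact hpq (Prod.ext h11 h22)
  have hdisj : Disjoint A1 A2 := by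
    rw [Finset.disjoint_left]
    intro s hs1 hs2
    rw [hA1, Finset.mem_biUnion] at hs1
    rw [hA2, Finset.mem_biUnion] at hs2
    obtain ⟨j, _, hj⟩ := hs1
    obtain ⟨p, _, hp⟩ := hs2
    rw [Finset.mem_powersetCard] at hj
    rw [Finset.mem_image] at hp
    obtain ⟨t, _, hts⟩ := hp
    have hmem : sv p.2 ∈ s := by rw [← hts]; exact Finset.mem_insert_self _ _
    have := (hBfacts j _ (hj.1 hmem)).1
    rw [hsv] at this; simp only at this; omega
  have hsub : ↑(A1 ∪ A2) ⊆ G.cliqueSet ℓ := by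
    intro s hs
    rw [Finset.coe_union, Set.mem_union] at hs
    rw [SimpleGraph.mem_cliqueSet_iff]
    rcases hs with hs | hs
    · rw [Finset.mem_coe, hA1, Finset.mem_biUnion] at hs
      obtain ⟨j, _, hj⟩ := hs
      exact hA1clique j s hj
    · rw [Finset.mem_coe, hA2, Finset.mem_biUnion] at hs
      obtain ⟨p, _, hp⟩ := hs
      rw [Finset.mem_image] at hp
      obtain ⟨t, ht, hts⟩ := hp
      rw [← hts]
      exact hA2clique p.1 p.2 t ht
  have goalC : k * (2*c).choose ℓ + k * (2*c).choose (ℓ - 1) * c ≤ (G.cliqueSet ℓ).ncard := by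
    have hcard : (A1 ∪ A2).card = k * (2*c).choose ℓ + k * (2*c).choose (ℓ - 1) * c := by
      rw [Finset.card_union_of_disjoint hdisj, hA1card, hA2card]
      ring
    calc k * (2*c).choose ℓ + k * (2*c).choose (ℓ - 1) * c
        = (↑(A1 ∪ A2) : Set (Finset (Fin n))).ncard := by
          rw [Set.ncard_coe_finset, hcard]
      _ ≤ (G.cliqueSet ℓ).ncard := Set.ncard_le_ncard hsub (Set.toFinite _)
  exact ⟨G, goalA, ⟨F, goalB.1, goalB.2.1, goalB.2.2⟩, goalC⟩
end

section
/- Let G be a finite simple triangle-free graph on n vertices. Then G contains an independent set of size at least ⌊√n⌋. -/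
open Finset SimpleGraph

theorem indep_aux : ∀ n : ℕ, ∀ {V : Type u} [Fintype V] [DecidableEq V]
    (G : SimpleGraph V) [DecidableRel G.Adj], Fintype.card V = n → G.CliqueFree 3 →
    ∃ s : Finset V, Nat.sqrt n ≤ s.card ∧ ∀ u ∈ s, ∀ v ∈ s, u ≠ v → ¬ G.Adj u v := by
  intro n
  induction n using Nat.strong_induction_on with
  | _ n ih =>
    intro V _ _ G _ hcard hG
    rcases Nat.eq_zero_or_pos n with h0 | hpos
    · exact ⟨∅, by simp [h0], by simp⟩
    have hne : Nonempty V := by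
      rw [← Fintype.card_pos_iff, hcard]; exact hpos
    obtain ⟨v⟩ := hne
    set k := Nat.sqrt n with hk
    by_cases hdeg : k ≤ G.degree v
    · refine ⟨G.neighborFinset v, by rwa [G.card_neighborFinset_eq_degree], ?_⟩
      intro a ha b hb hab hadj
      rw [mem_neighborFinset] at ha hb
      exact hG {v, a, b} (is3Clique_triple_iff.2 ⟨ha, hb, hadj⟩)
    · push_neg at hdeg
      set T : Finset V := insert v (G.neighborFinset v) with hT
      have hTcard : T.card ≤ k := by
        have : T.card ≤ G.degree v + 1 := by
          rw [hT]
          simpa [G.card_neighborFinset_eq_degree] using card_insert_le v (G.neighborFinset v)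
        omega
      have hk1 : 1 ≤ k := by
        rw [hk]
        exact Nat.sqrt_pos.2 hpos
      set Wf : Finset V := Tᶜ with hW
      let G' : SimpleGraph ↥Wf := G.comap (Subtype.val)
      haveI : DecidableRel G'.Adj := Classical.decRel _
      have hG' : G'.CliqueFree 3 :=
        hG.comap (SimpleGraph.Embedding.comap (Function.Embedding.subtype _) G).isContained
      set m := Fintype.card ↥Wf with hm
      have hmcard : m = n - T.card := by
        rw [hm, Fintype.card_coe, hW, card_compl, hcard]
      have hmlt : m < n := by
        have hvT : v ∈ T := mem_insert_self _ _
        have : 1 ≤ T.card := card_pos.2 ⟨v, hvT⟩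
        omega
      obtain ⟨s', hs'card, hs'ind⟩ := ih m hmlt G' rfl hG'
      have hsqm : k - 1 ≤ Nat.sqrt m := by
        rw [Nat.le_sqrt]
        have h1 : (k - 1) * (k - 1) + T.card ≤ k * k := by
          obtain ⟨j, hj⟩ := Nat.exists_eq_add_of_le hk1
          have hkj : k - 1 = j := by omega
          rw [hkj]
          nlinarith [hTcard, hj]
        have h2 : k * k ≤ n := by
          have := Nat.sqrt_le' n
          simpa [pow_two] using this
        omega
      refine ⟨insert v (s'.image Subtype.val), ?_, ?_⟩
      · have himg : (s'.image Subtype.val).card = s'.card :=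
          card_image_of_injective _ Subtype.val_injective
        have hvni : v ∉ s'.image Subtype.val := by
          intro hmem
          obtain ⟨w, _, hwv⟩ := mem_image.1 hmem
          have hw : (w : V) ∈ Tᶜ := w.2
          exact mem_compl.1 hw (by rw [hwv, hT]; exact mem_insert_self _ _)
        rw [card_insert_of_notMem hvni, himg]
        omega
      · intro a ha b hb hab hadj
        have key : ∀ w : V, w ∈ s'.image Subtype.val → w ≠ v ∧ ¬ G.Adj v w := by
          intro w hw
          obtain ⟨w', _, rfl⟩ := mem_image.1 hw
          have hw' : (w' : V) ∈ Tᶜ := w'.2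
          have hw2 : (w' : V) ∉ T := mem_compl.1 hw'
          rw [hT, mem_insert, mem_neighborFinset] at hw2
          push_neg at hw2
          exact ⟨fun h => hw2.1 h, hw2.2⟩
        rcases mem_insert.1 ha with rfl | ha' <;> rcases mem_insert.1 hb with rfl | hb'
        · exact hab rfl
        · exact (key b hb').2 hadj
        · exact (key a ha').2 (hadj.symm)
        · obtain ⟨⟨a', haW⟩, has, rfl⟩ := mem_image.1 ha'
          obtain ⟨⟨b', hbW⟩, hbs, rfl⟩ := mem_image.1 hb'
          exact hs'ind _ has _ hbs (fun h => hab (congrArg Subtype.val h)) hadj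

/-- A finite simple triangle-free graph on `n` vertices contains an independent set of size
at least `⌊√n⌋`. -/
theorem indep_set_of_triangle_free {V : Type*} [Fintype V] [DecidableEq V]
    (G : SimpleGraph V) [DecidableRel G.Adj] (hG : G.CliqueFree 3) :
    ∃ s : Finset V, Nat.sqrt (Fintype.card V) ≤ s.card ∧
      ∀ u ∈ s, ∀ v ∈ s, u ≠ v → ¬ G.Adj u v :=
  indep_aux (Fintype.card V) G rfl hG
end

section
/- Let G be a finite simple graph on a vertex set V of size n with m edges and t triangles, and let p be a real number with 0 ≤ p ≤ 1. For a subset U ⊆ V let w_p(U) = p^{|U|}·(1−p)^{n−|U|} and let t(G[U]) denote the number of triangles of the subgraph of G induced by U. Then the variance of the triangle count, namely (Σ_{U ⊆ V} w_p(U)·t(G[U])²) − (t·p³)², is at most t·p³ + 6·t·m·p⁵ + 6·t·n·p⁴. -/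
open Finset

section Aux
variable {V : Type*} [Fintype V] [DecidableEq V]

lemma aux_pow_sum_powerset (B : Finset V) (q r : ℝ) :
    ∑ S ∈ B.powerset, q ^ S.card * r ^ (B.card - S.card) = (q + r) ^ B.card := by
  rw [← Finset.prod_const, Finset.prod_add]
  refine Finset.sum_congr rfl fun S hS => ?_
  rw [Finset.prod_const, Finset.prod_const, Finset.card_sdiff_of_subset (Finset.mem_powerset.mp hS)]

lemma aux_key_sum (p : ℝ) (A : Finset V) :
    ∑ U : Finset V, p ^ U.card * (1 - p) ^ (Fintype.card V - U.card)
      * (if A ⊆ U then (1:ℝ) else 0) = p ^ A.card := by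
  classical
  simp_rw [mul_ite, mul_one, mul_zero]
  rw [← Finset.sum_filter]
  have hstep : ∑ U ∈ univ.filter (fun U : Finset V => A ⊆ U),
      p ^ U.card * (1 - p) ^ (Fintype.card V - U.card)
      = ∑ S ∈ (univ \ A).powerset,
        p ^ A.card * (p ^ S.card * (1 - p) ^ ((univ \ A).card - S.card)) := by
    refine Finset.sum_nbij' (fun U => U \ A) (fun S => A ∪ S) ?_ ?_ ?_ ?_ ?_
    · intro U hU
      exact Finset.mem_powerset.mpr (Finset.sdiff_subset_sdiff (Finset.subset_univ _) le_rfl)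
    · intro S hS
      simp only [mem_filter, mem_univ, true_and]
      exact Finset.subset_union_left
    · intro U hU
      simp only [mem_filter, mem_univ, true_and] at hU
      exact Finset.union_sdiff_of_subset hU
    · intro S hS
      have hd : Disjoint A S := by
        refine Finset.disjoint_left.mpr fun x hxA hxS => ?_
        exact (Finset.mem_sdiff.mp (Finset.mem_powerset.mp hS hxS)).2 hxA
      exact Finset.union_sdiff_cancel_left hd
    · intro U hU
      simp only [mem_filter, mem_univ, true_and] at hU
      have h1 : U.card = A.card + (U \ A).card := by
        have := Finset.card_sdiff_add_card_eq_card hU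
        omega
      have h2 : (univ \ A).card = Fintype.card V - A.card := by
        rw [Finset.card_sdiff_of_subset (Finset.subset_univ _), Finset.card_univ]
      have h3 : U.card ≤ Fintype.card V := Finset.card_le_univ U
      have h4 : Fintype.card V - U.card = (univ \ A).card - (U \ A).card := by omega
      rw [h4, h1, pow_add]
      ring
  rw [hstep, ← Finset.mul_sum, aux_pow_sum_powerset]
  norm_num

end Aux

section Inner
variable {V : Type*} [Fintype V] [DecidableEq V]

lemma aux_inner_bound (G : SimpleGraph V) [DecidableRel G.Adj] (p : ℝ)
    (hp0 : 0 ≤ p) (hp1 : p ≤ 1) {s : Finset V} (hs : s ∈ G.cliqueFinset 3) :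
    ∑ s' ∈ G.cliqueFinset 3, (p ^ (s ∪ s').card - p ^ 6)
      ≤ p ^ 3 + 6 * (G.edgeFinset.card : ℝ) * p ^ 5 + 6 * (Fintype.card V : ℝ) * p ^ 4 := by
  classical
  set T := G.cliqueFinset 3 with hT
  have hscard : s.card = 3 := (SimpleGraph.mem_cliqueFinset_iff.mp hs).card_eq
  have hcard : ∀ s' ∈ T, s'.card = 3 :=
    fun s' h => (SimpleGraph.mem_cliqueFinset_iff.mp h).card_eq
  have hunion : ∀ s' ∈ T, (s ∪ s').card = 6 - (s ∩ s').card := by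
    intro s' h
    have h1 := Finset.card_union_add_card_inter s s'
    have h2 : (s ∩ s').card ≤ 3 := by
      calc (s ∩ s').card ≤ s.card := Finset.card_le_card Finset.inter_subset_left
      _ = 3 := hscard
    have h3 := hcard s' h
    omega
  have hp6 : (0:ℝ) ≤ p ^ 6 := pow_nonneg hp0 6
  have hp5 : (0:ℝ) ≤ p ^ 5 := pow_nonneg hp0 5
  have hp4 : (0:ℝ) ≤ p ^ 4 := pow_nonneg hp0 4
  -- reconstruction lemma
  have hrec : ∀ s' : Finset V, (s \ (s \ s')) ∪ (s' \ s) = s' := by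
    intro s'
    rw [Finset.sdiff_sdiff_self_left, Finset.inter_comm, Finset.union_comm]
    exact Finset.sdiff_union_inter s' s
  -- split off s' = s
  rw [← Finset.add_sum_erase _ _ hs]
  have hfs : p ^ (s ∪ s).card - p ^ 6 ≤ p ^ 3 := by
    rw [Finset.union_self, hscard]
    linarith
  -- split the rest
  set E := T.erase s with hE
  have hEsub : ∀ s' ∈ E, s' ∈ T ∧ s' ≠ s := by
    intro s' h
    exact ⟨Finset.mem_of_mem_erase h, Finset.ne_of_mem_erase h⟩
  rw [← Finset.sum_filter_add_sum_filter_not E (fun s' => (s ∩ s').card = 2)]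
  rw [← Finset.sum_filter_add_sum_filter_not
      (E.filter (fun s' => ¬ (s ∩ s').card = 2)) (fun s' => (s ∩ s').card = 1)]
  -- piece with inter card 2
  have hb2 : ∑ s' ∈ E.filter (fun s' => (s ∩ s').card = 2), (p ^ (s ∪ s').card - p ^ 6)
      ≤ 3 * (Fintype.card V : ℝ) * p ^ 4 := by
    have hpt : ∀ s' ∈ E.filter (fun s' => (s ∩ s').card = 2),
        p ^ (s ∪ s').card - p ^ 6 ≤ p ^ 4 := by
      intro s' h
      obtain ⟨hmem, hk⟩ := Finset.mem_filter.mp h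
      have := hunion s' (hEsub s' hmem).1
      rw [this, hk]
      norm_num
      linarith
    calc ∑ s' ∈ E.filter (fun s' => (s ∩ s').card = 2), (p ^ (s ∪ s').card - p ^ 6)
        ≤ ∑ _s' ∈ E.filter (fun s' => (s ∩ s').card = 2), p ^ 4 := Finset.sum_le_sum hpt
      _ = ((E.filter (fun s' => (s ∩ s').card = 2)).card : ℝ) * p ^ 4 := by
          rw [Finset.sum_const, nsmul_eq_mul]
      _ ≤ 3 * (Fintype.card V : ℝ) * p ^ 4 := by
          refine mul_le_mul_of_nonneg_right ?_ hp4
          have hcb : (E.filter (fun s' => (s ∩ s').card = 2)).card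
              ≤ 3 * Fintype.card V := by
            have hinj : (E.filter (fun s' => (s ∩ s').card = 2)).card
                ≤ ((s.powersetCard 1) ×ˢ ((univ : Finset V).powersetCard 1)).card := by
              apply Finset.card_le_card_of_injOn (fun s' => (s \ s', s' \ s))
              · intro s' h
                obtain ⟨hmem, hk⟩ := Finset.mem_filter.mp h
                have h3' := hcard s' (hEsub s' hmem).1
                have c1 : (s \ s').card = 1 := by
                  have := Finset.card_sdiff_add_card_inter s s'
                  omega
                have c2 : (s' \ s).card = 1 := by
                  have := Finset.card_sdiff_add_card_inter s' s
                  rw [Finset.inter_comm] at this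
                  omega
                refine Finset.mem_product.mpr ⟨?_, ?_⟩
                · exact Finset.mem_powersetCard.mpr ⟨Finset.sdiff_subset, c1⟩
                · exact Finset.mem_powersetCard.mpr ⟨Finset.subset_univ _, c2⟩
              · intro a _ b _ hab
                simp only [Prod.mk.injEq] at hab
                have := hrec a
                rw [hab.1, hab.2, hrec b] at this
                exact this.symm
            rw [Finset.card_product, Finset.card_powersetCard, Finset.card_powersetCard,
              hscard, Finset.card_univ] at hinj
            simpa using hinj
          exact_mod_cast hcb
  -- piece with inter card 1
  have hb1 : ∑ s' ∈ (E.filter (fun s' => ¬ (s ∩ s').card = 2)).filter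
        (fun s' => (s ∩ s').card = 1), (p ^ (s ∪ s').card - p ^ 6)
      ≤ 3 * (G.edgeFinset.card : ℝ) * p ^ 5 := by
    set F := (E.filter (fun s' => ¬ (s ∩ s').card = 2)).filter (fun s' => (s ∩ s').card = 1)
      with hF
    have hFmem : ∀ s' ∈ F, s' ∈ T ∧ s' ≠ s ∧ (s ∩ s').card = 1 := by
      intro s' h
      obtain ⟨h1, h2⟩ := Finset.mem_filter.mp h
      obtain ⟨h3, _⟩ := Finset.mem_filter.mp h1
      exact ⟨(hEsub s' h3).1, (hEsub s' h3).2, h2⟩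
    have hpt : ∀ s' ∈ F, p ^ (s ∪ s').card - p ^ 6 ≤ p ^ 5 := by
      intro s' h
      obtain ⟨hmem, _, hk⟩ := hFmem s' h
      rw [hunion s' hmem, hk]
      norm_num
      linarith
    set E2 : Finset (Finset V) :=
      G.edgeFinset.image (fun e => ({(Quot.out e).1, (Quot.out e).2} : Finset V)) with hE2
    have hE2card : E2.card ≤ G.edgeFinset.card := Finset.card_image_le
    calc ∑ s' ∈ F, (p ^ (s ∪ s').card - p ^ 6)
        ≤ ∑ _s' ∈ F, p ^ 5 := Finset.sum_le_sum hpt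
      _ = (F.card : ℝ) * p ^ 5 := by rw [Finset.sum_const, nsmul_eq_mul]
      _ ≤ 3 * (G.edgeFinset.card : ℝ) * p ^ 5 := by
          refine mul_le_mul_of_nonneg_right ?_ hp5
          have hcb : F.card ≤ 3 * G.edgeFinset.card := by
            have hinj : F.card ≤ ((s.powersetCard 1) ×ˢ E2).card := by
              apply Finset.card_le_card_of_injOn (fun s' => (s ∩ s', s' \ s))
              · intro s' h
                obtain ⟨hmem, hne, hk⟩ := hFmem s' h
                have h3' := hcard s' hmem
                have c2 : (s' \ s).card = 2 := by
                  have := Finset.card_sdiff_add_card_inter s' s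
                  rw [Finset.inter_comm] at this
                  omega
                refine Finset.mem_product.mpr ⟨?_, ?_⟩
                · exact Finset.mem_powersetCard.mpr ⟨Finset.inter_subset_left, hk⟩
                · -- s' \ s is an edge of G
                  obtain ⟨a, b, hab, hset⟩ := Finset.card_eq_two.mp c2
                  have has : a ∈ s' := by
                    have : a ∈ s' \ s := hset ▸ Finset.mem_insert_self a {b}
                    exact (Finset.mem_sdiff.mp this).1
                  have hbs : b ∈ s' := by
                    have : b ∈ s' \ s := hset ▸ Finset.mem_insert_of_mem (Finset.mem_singleton_self b)
                    exact (Finset.mem_sdiff.mp this).1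
                  have hadj : G.Adj a b :=
                    (SimpleGraph.mem_cliqueFinset_iff.mp hmem).1 has hbs hab
                  refine Finset.mem_image.mpr ⟨s(a, b), ?_, ?_⟩
                  · exact SimpleGraph.mem_edgeFinset.mpr hadj
                  · have hout : s((Quot.out (s(a, b) : Sym2 V)).1, (Quot.out (s(a, b) : Sym2 V)).2)
                        = (s(a, b) : Sym2 V) := Quot.out_eq _
                    rw [Sym2.eq_iff] at hout
                    rcases hout with ⟨h1', h2'⟩ | ⟨h1', h2'⟩ <;> simp only [h1', h2', hset] <;>
                      simp [Finset.pair_comm]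
              · intro a ha b hb hab
                simp only [Prod.mk.injEq] at hab
                have h1 : (s ∩ a) ∪ (a \ s) = a := by
                  rw [Finset.inter_comm, Finset.union_comm]
                  exact Finset.sdiff_union_inter a s
                have h2 : (s ∩ b) ∪ (b \ s) = b := by
                  rw [Finset.inter_comm, Finset.union_comm]
                  exact Finset.sdiff_union_inter b s
                rw [← h1, ← h2, hab.1, hab.2]
            rw [Finset.card_product, Finset.card_powersetCard, hscard] at hinj
            calc F.card ≤ Nat.choose 3 1 * E2.card := hinj
              _ ≤ 3 * G.edgeFinset.card := by
                  simpa using Nat.mul_le_mul_left 3 hE2card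
          exact_mod_cast hcb
  -- remaining piece is zero
  have hb0 : ∑ s' ∈ ((E.filter (fun s' => ¬ (s ∩ s').card = 2)).filter
        (fun s' => ¬ (s ∩ s').card = 1)), (p ^ (s ∪ s').card - p ^ 6) = 0 := by
    apply Finset.sum_eq_zero
    intro s' h
    obtain ⟨h1, h2⟩ := Finset.mem_filter.mp h
    obtain ⟨h3, h4⟩ := Finset.mem_filter.mp h1
    obtain ⟨hmem, hne⟩ := hEsub s' h3
    have h3' := hcard s' hmem
    have hle : (s ∩ s').card ≤ 3 := by
      calc (s ∩ s').card ≤ s.card := Finset.card_le_card Finset.inter_subset_left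
      _ = 3 := hscard
    have hne3 : (s ∩ s').card ≠ 3 := by
      intro hc
      have hss : s ∩ s' = s := Finset.eq_of_subset_of_card_le Finset.inter_subset_left
        (by omega)
      have hsub : s ⊆ s' := by
        intro x hx
        have : x ∈ s ∩ s' := by rw [hss]; exact hx
        exact (Finset.mem_inter.mp this).2
      have : s' = s := (Finset.eq_of_subset_of_card_le hsub (by omega)).symm
      exact hne this
    have h0 : (s ∩ s').card = 0 := by omega
    rw [hunion s' hmem, h0]
    norm_num
  have hn4 : 3 * (Fintype.card V : ℝ) * p ^ 4 ≤ 6 * (Fintype.card V : ℝ) * p ^ 4 := by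
    have : (0:ℝ) ≤ (Fintype.card V : ℝ) * p ^ 4 :=
      mul_nonneg (Nat.cast_nonneg _) hp4
    nlinarith
  have hm5 : 3 * (G.edgeFinset.card : ℝ) * p ^ 5 ≤ 6 * (G.edgeFinset.card : ℝ) * p ^ 5 := by
    have : (0:ℝ) ≤ (G.edgeFinset.card : ℝ) * p ^ 5 :=
      mul_nonneg (Nat.cast_nonneg _) hp5
    nlinarith
  linarith

end Inner

/-- The number of triangles of the subgraph of `G` induced by `U`. -/
def inducedTriangleCount {V : Type*} [Fintype V] [DecidableEq V] (G : SimpleGraph V)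
    [DecidableRel G.Adj] (U : Finset V) : ℕ :=
  ((G.cliqueFinset 3).filter (fun s => s ⊆ U)).card

/-- The variance of the number of surviving triangles in a random induced subgraph (each
vertex retained independently with probability `p`) is at most
`t·p³ + 6·t·m·p⁵ + 6·t·n·p⁴`. -/
theorem variance_induced_triangle_count_le {V : Type*} [Fintype V] [DecidableEq V]
    (G : SimpleGraph V) [DecidableRel G.Adj] (p : ℝ) (hp0 : 0 ≤ p) (hp1 : p ≤ 1) :
    (∑ U : Finset V, p ^ U.card * (1 - p) ^ (Fintype.card V - U.card)
        * (inducedTriangleCount G U : ℝ) ^ 2)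
      - (((G.cliqueFinset 3).card : ℝ) * p ^ 3) ^ 2
      ≤ ((G.cliqueFinset 3).card : ℝ) * p ^ 3
        + 6 * ((G.cliqueFinset 3).card : ℝ) * (G.edgeFinset.card : ℝ) * p ^ 5
        + 6 * ((G.cliqueFinset 3).card : ℝ) * (Fintype.card V : ℝ) * p ^ 4 := by
  classical
  set T := G.cliqueFinset 3 with hT
  have h1 : ∀ U : Finset V, (inducedTriangleCount G U : ℝ) ^ 2
      = ∑ s ∈ T, ∑ s' ∈ T, (if s ∪ s' ⊆ U then (1:ℝ) else 0) := by
    intro U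
    have hc : (inducedTriangleCount G U : ℝ)
        = ∑ s ∈ T, (if s ⊆ U then (1:ℝ) else 0) := by
      rw [inducedTriangleCount, Finset.sum_boole, ← hT]
    rw [hc, sq, Finset.sum_mul_sum]
    refine Finset.sum_congr rfl fun s _ => Finset.sum_congr rfl fun s' _ => ?_
    by_cases h : s ⊆ U <;> by_cases h' : s' ⊆ U <;>
      simp [h, h', Finset.union_subset_iff]
  have h2 : (∑ U : Finset V, p ^ U.card * (1 - p) ^ (Fintype.card V - U.card)
        * (inducedTriangleCount G U : ℝ) ^ 2)
      = ∑ s ∈ T, ∑ s' ∈ T, p ^ (s ∪ s').card := by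
    simp_rw [h1, Finset.mul_sum]
    rw [Finset.sum_comm]
    refine Finset.sum_congr rfl fun s _ => ?_
    rw [Finset.sum_comm]
    exact Finset.sum_congr rfl fun s' _ => aux_key_sum p (s ∪ s')
  have h3 : ((T.card : ℝ) * p ^ 3) ^ 2 = ∑ s ∈ T, ∑ s' ∈ T, p ^ 6 := by
    simp [Finset.sum_const, nsmul_eq_mul]
    ring
  rw [h2, h3, ← Finset.sum_sub_distrib]
  simp_rw [← Finset.sum_sub_distrib]
  calc ∑ s ∈ T, ∑ s' ∈ T, (p ^ (s ∪ s').card - p ^ 6)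
      ≤ ∑ _s ∈ T, (p ^ 3 + 6 * (G.edgeFinset.card : ℝ) * p ^ 5
          + 6 * (Fintype.card V : ℝ) * p ^ 4) :=
        Finset.sum_le_sum fun s hs => aux_inner_bound G p hp0 hp1 hs
    _ = (T.card : ℝ) * (p ^ 3 + 6 * (G.edgeFinset.card : ℝ) * p ^ 5
          + 6 * (Fintype.card V : ℝ) * p ^ 4) := by
        rw [Finset.sum_const, nsmul_eq_mul]
    _ = (T.card : ℝ) * p ^ 3
        + 6 * (T.card : ℝ) * (G.edgeFinset.card : ℝ) * p ^ 5
        + 6 * (T.card : ℝ) * (Fintype.card V : ℝ) * p ^ 4 := by ring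
end
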